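/- arXiv:2403.06975 — 5 statements merged into one kernel-verified Lean document; each statement's English description precedes it below -/
import Mathlib

section
/- For every nonnegative integer k and every formal power series f, the coefficient of z^k in f(T(z)) equals the coefficient of z^k in f(z)(1-z)e^{kz}, where T(z) = sum_{m≥1} m^{m-1} z^m/m! is the tree function satisfying T(z) = z e^{T(z)}. -/
open PowerSeries Finset

/-- Composition `f(g)` of formal power series, valid when `g` has zero constant
term: the coefficient of `z^k` in `f(g)` only involves `g^i` for `i ≤ k`. -/
noncomputable def psComp (f g : PowerSeries ℚ) : PowerSeries ℚ :=
  PowerSeries.mk fun k => ∑ i ∈ Finset.range (k + 1),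
    PowerSeries.coeff i f * PowerSeries.coeff k (g ^ i)

/-- The tree function `T(z) = ∑_{m≥1} m^(m-1) z^m / m!`, satisfying `T = z e^T`. -/
noncomputable def treeFun : PowerSeries ℚ :=
  PowerSeries.mk fun m => if m = 0 then 0 else (m : ℚ) ^ (m - 1) / m.factorial

lemma constantCoeff_treeFun : constantCoeff treeFun = 0 := by
  rw [← coeff_zero_eq_constantCoeff_apply]
  simp [treeFun]

lemma coeff_pow_treeFun_of_lt {n i : ℕ} (h : n < i) : PowerSeries.coeff n (treeFun ^ i) = 0 := by
  have hd : (PowerSeries.X : PowerSeries ℚ) ^ i ∣ treeFun ^ i :=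
    pow_dvd_pow_of_dvd (PowerSeries.X_dvd_iff.mpr constantCoeff_treeFun) i
  exact PowerSeries.X_pow_dvd_iff.mp hd n h

lemma coeff_psComp (f : PowerSeries ℚ) (n : ℕ) :
    PowerSeries.coeff n (psComp f treeFun) =
      ∑ i ∈ Finset.range (n + 1), PowerSeries.coeff i f * PowerSeries.coeff n (treeFun ^ i) :=
  coeff_mk _ _

lemma coeff_aeval (P : Polynomial ℚ) (n : ℕ) :
    PowerSeries.coeff n (Polynomial.aeval treeFun P) =
      ∑ i ∈ Finset.range (n + 1), P.coeff i * PowerSeries.coeff n (treeFun ^ i) := by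
  rw [Polynomial.aeval_eq_sum_range' (n := max (P.natDegree + 1) (n + 1))
    (lt_of_lt_of_le (Nat.lt_succ_self _) (le_max_left _ _)) treeFun, map_sum]
  simp only [map_smul, smul_eq_mul]
  rw [eq_comm]
  apply Finset.sum_subset (Finset.range_subset_range.mpr (le_max_right _ _))
  intro i _ hi
  rw [Finset.mem_range, not_lt] at hi
  rw [coeff_pow_treeFun_of_lt (by omega), mul_zero]

lemma coeff_aeval_trunc (f : PowerSeries ℚ) {n p : ℕ} (hp : p ≤ n) :
    PowerSeries.coeff p (Polynomial.aeval treeFun (trunc (n + 1) f)) =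
      PowerSeries.coeff p (psComp f treeFun) := by
  rw [coeff_aeval, coeff_psComp]
  apply Finset.sum_congr rfl
  intro i hi
  rw [Finset.mem_range] at hi
  rw [coeff_trunc, if_pos (by omega)]

lemma psComp_mul (f h : PowerSeries ℚ) :
    psComp (f * h) treeFun = psComp f treeFun * psComp h treeFun := by
  ext n
  have e1 : PowerSeries.coeff n (psComp (f * h) treeFun) =
      PowerSeries.coeff n (Polynomial.aeval treeFun (trunc (n + 1) f * trunc (n + 1) h)) := by
    rw [coeff_aeval, coeff_psComp]
    apply Finset.sum_congr rfl
    intro i hi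
    rw [Finset.mem_range] at hi
    congr 1
    have h2 := congrArg (fun q => Polynomial.coeff q i) (trunc_trunc_mul_trunc (n := n + 1) f h)
    simp only [coeff_trunc, if_pos (show i < n + 1 by omega)] at h2
    rw [← h2, ← Polynomial.coe_mul, Polynomial.coeff_coe]
  rw [e1, map_mul, PowerSeries.coeff_mul, PowerSeries.coeff_mul]
  apply Finset.sum_congr rfl
  intro p hp
  rw [Finset.HasAntidiagonal.mem_antidiagonal] at hp
  rw [coeff_aeval_trunc f (by omega), coeff_aeval_trunc h (by omega)]

lemma psComp_one : psComp 1 treeFun = 1 := by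
  ext n
  rw [coeff_psComp]
  rw [Finset.sum_eq_single 0]
  · simp
  · intro i _ hi
    rw [PowerSeries.coeff_one, if_neg hi, zero_mul]
  · intro hn
    simp at hn

noncomputable def Efun (a : ℚ) : PowerSeries ℚ := psComp (PowerSeries.rescale a (PowerSeries.exp ℚ)) treeFun

lemma Efun_zero : Efun 0 = 1 := by
  rw [Efun, rescale_zero]
  simp only [RingHom.coe_comp, Function.comp_apply, constantCoeff_exp, map_one]
  exact psComp_one

lemma Efun_add (a b : ℚ) : Efun (a + b) = Efun a * Efun b := by
  rw [Efun, ← exp_mul_exp_eq_exp_add, psComp_mul]; rfl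

lemma Efun_pow (i : ℕ) : Efun 1 ^ i = Efun (i : ℚ) := by
  induction i with
  | zero => simp [Efun_zero]
  | succ m ih => rw [pow_succ, ih, ← Efun_add]; norm_num

lemma coeff_Efun (a : ℚ) (n : ℕ) :
    PowerSeries.coeff n (Efun a) =
      ∑ j ∈ Finset.range (n + 1), a ^ j / j.factorial * PowerSeries.coeff n (treeFun ^ j) := by
  rw [Efun, coeff_psComp]
  apply Finset.sum_congr rfl
  intro j _
  rw [coeff_rescale, coeff_exp]
  simp [div_eq_mul_inv]

lemma coeff_zero_Efun (a : ℚ) : PowerSeries.coeff 0 (Efun a) = 1 := by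
  rw [coeff_Efun]
  simp

lemma coeff_treeFun (m : ℕ) :
    PowerSeries.coeff m treeFun = if m = 0 then 0 else (m : ℚ) ^ (m - 1) / m.factorial :=
  coeff_mk _ _

theorem master (n : ℕ) :
    (PowerSeries.coeff n treeFun = PowerSeries.coeff n (PowerSeries.X * Efun 1)) ∧
    (∀ i, 1 ≤ i → i ≤ n → PowerSeries.coeff n (treeFun ^ i) =
        i * (n : ℚ) ^ (n - i) / ((n - i).factorial * n)) ∧
    (1 ≤ n → ∀ a : ℚ, PowerSeries.coeff n (Efun a) =
        a * (a + n) ^ (n - 1) / n.factorial) := by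
  induction n using Nat.strong_induction_on with
  | _ n ih =>
  have hA : PowerSeries.coeff n treeFun = PowerSeries.coeff n (PowerSeries.X * Efun 1) := by
    match n with
    | 0 =>
      rw [coeff_treeFun, PowerSeries.coeff_zero_eq_constantCoeff, map_mul, constantCoeff_X,
        zero_mul, if_pos rfl]
    | 1 =>
      rw [coeff_treeFun, PowerSeries.coeff_succ_X_mul, coeff_zero_Efun]
      norm_num
    | (m + 2) =>
      rw [coeff_treeFun, PowerSeries.coeff_succ_X_mul,
        ((ih (m + 1) (by omega)).2.2 (by omega)) 1]
      have h1 : ((m : ℚ) + 1) + 1 ≠ 0 := by positivity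
      have h2 : ((m + 1).factorial : ℚ) ≠ 0 := Nat.cast_ne_zero.mpr (Nat.factorial_ne_zero _)
      rw [if_neg (by omega)]
      show ((m + 2 : ℕ) : ℚ) ^ (m + 1) / ((m + 2).factorial : ℚ)
          = 1 * (1 + ((m + 1 : ℕ) : ℚ)) ^ m / ((m + 1).factorial : ℚ)
      rw [Nat.factorial_succ (m + 1)]
      push_cast
      rw [pow_succ]
      field_simp
      ring
  have hB : ∀ i, 1 ≤ i → i ≤ n → PowerSeries.coeff n (treeFun ^ i) =
      i * (n : ℚ) ^ (n - i) / ((n - i).factorial * n) := by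
    intro i hi1 hi2
    have hdvd : (PowerSeries.X : PowerSeries ℚ) ^ (n + 1) ∣ treeFun - PowerSeries.X * Efun 1 := by
      rw [PowerSeries.X_pow_dvd_iff]
      intro m hm
      rw [map_sub, sub_eq_zero]
      rcases eq_or_lt_of_le (Nat.lt_succ_iff.mp hm) with h | h
      · rw [h]; exact hA
      · exact (ih m h).1
    have hdvd2 : (PowerSeries.X : PowerSeries ℚ) ^ (n + 1) ∣
        treeFun ^ i - (PowerSeries.X * Efun 1) ^ i :=
      hdvd.trans (sub_dvd_pow_sub_pow _ _ i)
    have hco : PowerSeries.coeff n (treeFun ^ i) =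
        PowerSeries.coeff n ((PowerSeries.X * Efun 1) ^ i) := by
      have := PowerSeries.X_pow_dvd_iff.mp hdvd2 n (Nat.lt_succ_self n)
      rw [map_sub, sub_eq_zero] at this
      exact this
    obtain ⟨m, rfl⟩ : ∃ m, n = i + m := ⟨n - i, by omega⟩
    rw [hco, mul_pow, Efun_pow, add_comm i m, PowerSeries.coeff_X_pow_mul,
      Nat.add_sub_cancel]
    rcases Nat.eq_zero_or_pos m with rfl | hm
    · rw [coeff_zero_Efun]
      have : (i : ℚ) ≠ 0 := by positivity
      simp [this]
    · obtain ⟨p, rfl⟩ : ∃ p, m = p + 1 := ⟨m - 1, by omega⟩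
      rw [(ih (p + 1) (by omega)).2.2 (by omega) (i : ℚ)]
      have h1 : ((p + 1).factorial : ℚ) ≠ 0 := Nat.cast_ne_zero.mpr (Nat.factorial_ne_zero _)
      have h3 : (i : ℚ) + ((p : ℚ) + 1) ≠ 0 := by positivity
      have h4 : (p : ℚ) + 1 + (i : ℚ) ≠ 0 := by positivity
      simp only [Nat.add_sub_cancel]
      push_cast
      rw [pow_succ]
      field_simp
      ring
  have hC : 1 ≤ n → ∀ a : ℚ, PowerSeries.coeff n (Efun a) =
      a * (a + n) ^ (n - 1) / n.factorial := by
    intro hn a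
    rw [coeff_Efun, Finset.sum_range_succ']
    have hn0 : n ≠ 0 := by omega
    have h0 : a ^ 0 / (Nat.factorial 0 : ℚ) * PowerSeries.coeff n (treeFun ^ 0) = 0 := by
      simp [PowerSeries.coeff_one, hn0]
    rw [h0, add_zero, add_pow, Nat.sub_add_cancel hn, Finset.mul_sum, Finset.sum_div]
    apply Finset.sum_congr rfl
    intro m hm
    rw [Finset.mem_range] at hm
    rw [hB (m + 1) (by omega) (by omega)]
    have e2 : n - (m + 1) = n - 1 - m := by omega
    rw [e2, Nat.cast_choose ℚ (show m ≤ n - 1 by omega)]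
    have h1 : ((n - 1 - m).factorial : ℚ) ≠ 0 := Nat.cast_ne_zero.mpr (Nat.factorial_ne_zero _)
    have h2 : ((m).factorial : ℚ) ≠ 0 := Nat.cast_ne_zero.mpr (Nat.factorial_ne_zero _)
    have h3 : ((n - 1).factorial : ℚ) ≠ 0 := Nat.cast_ne_zero.mpr (Nat.factorial_ne_zero _)
    have h4 : (n : ℚ) ≠ 0 := by positivity
    have h5 : ((n).factorial : ℚ) = (n : ℚ) * ((n - 1).factorial : ℚ) := by
      rw [← Nat.cast_mul, ← Nat.succ_pred_eq_of_pos hn]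
      rw [Nat.factorial_succ]
      simp [Nat.succ_pred_eq_of_pos hn]
    have h6 : ((m + 1).factorial : ℚ) = ((m : ℚ) + 1) * (m.factorial : ℚ) := by
      rw [Nat.factorial_succ]; push_cast; ring
    rw [h5, h6]
    have h7 : (m : ℚ) + 1 ≠ 0 := by positivity
    field_simp
    push_cast
    ring
  exact ⟨hA, hB, hC⟩

lemma coeff_oneSubX_exp (k m : ℕ) :
    PowerSeries.coeff m ((1 - PowerSeries.X) * PowerSeries.rescale (k : ℚ) (PowerSeries.exp ℚ)) =
      (k : ℚ) ^ m / m.factorial -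
        (if m = 0 then 0 else (k : ℚ) ^ (m - 1) / (m - 1).factorial) := by
  rw [sub_mul, one_mul, map_sub]
  congr 1
  · rw [coeff_rescale, coeff_exp]
    simp [div_eq_mul_inv]
  · match m with
    | 0 =>
      rw [if_pos rfl, PowerSeries.coeff_zero_eq_constantCoeff, map_mul, constantCoeff_X, zero_mul]
    | (p + 1) =>
      rw [if_neg (by omega), PowerSeries.coeff_succ_X_mul, coeff_rescale, coeff_exp]
      simp [div_eq_mul_inv]

lemma key (i k : ℕ) (hik : i ≤ k) :
    PowerSeries.coeff k (treeFun ^ i) =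
      PowerSeries.coeff (k - i)
        ((1 - PowerSeries.X) * PowerSeries.rescale (k : ℚ) (PowerSeries.exp ℚ)) := by
  rw [coeff_oneSubX_exp]
  rcases Nat.eq_zero_or_pos i with rfl | hi
  · rcases Nat.eq_zero_or_pos k with rfl | hk
    · norm_num
    · obtain ⟨p, rfl⟩ : ∃ p, k = p + 1 := ⟨k - 1, by omega⟩
      rw [pow_zero, PowerSeries.coeff_one, if_neg (by omega), if_neg (by omega)]
      simp only [Nat.sub_zero, Nat.add_sub_cancel]
      rw [Nat.factorial_succ]
      have h1 : ((p).factorial : ℚ) ≠ 0 := Nat.cast_ne_zero.mpr (Nat.factorial_ne_zero _)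
      have h2 : ((p : ℚ) + 1) ≠ 0 := by positivity
      push_cast
      rw [pow_succ]
      field_simp
      ring
  · have hk : 1 ≤ k := le_trans hi hik
    rw [(master k).2.1 i hi hik]
    rcases Nat.eq_zero_or_pos (k - i) with hm | hm
    · -- i = k
      have : i = k := by omega
      subst this
      rw [hm]
      rw [if_pos rfl]
      simp only [Nat.sub_self] at hm ⊢
      norm_num
      have h2 : (i : ℚ) ≠ 0 := by positivity
      simp [h2]; omega
    · obtain ⟨p, hp⟩ : ∃ p, k - i = p + 1 := ⟨k - i - 1, by omega⟩
      rw [hp, if_neg (by omega)]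
      simp only [Nat.add_sub_cancel]
      have hki : (k : ℚ) = (i : ℚ) + (p : ℚ) + 1 := by
        have : k = i + (p + 1) := by omega
        rw [this]; push_cast; ring
      have h1 : ((p + 1).factorial : ℚ) ≠ 0 := Nat.cast_ne_zero.mpr (Nat.factorial_ne_zero _)
      have h2 : ((p).factorial : ℚ) ≠ 0 := Nat.cast_ne_zero.mpr (Nat.factorial_ne_zero _)
      have h3 : (k : ℚ) ≠ 0 := by positivity
      rw [Nat.factorial_succ]
      push_cast
      rw [pow_succ]
      field_simp
      ring_nf
      rw [hki]
      ring

/-- for every nonnegative integer `k` and every formal power series `f`,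
`[z^k] f(T(z)) = [z^k] f(z)(1-z)e^{kz}`. -/
theorem coeff_comp_treeFun (k : ℕ) (f : PowerSeries ℚ) :
    PowerSeries.coeff k (psComp f treeFun) =
      PowerSeries.coeff k (f * (1 - PowerSeries.X) * PowerSeries.rescale (k : ℚ) (PowerSeries.exp ℚ)) := by
  rw [mul_assoc, PowerSeries.coeff_mul, coeff_psComp,
    Finset.Nat.sum_antidiagonal_eq_sum_range_succ_mk]
  apply Finset.sum_congr rfl
  intro i hi
  rw [Finset.mem_range] at hi
  congr 1
  exact key i k (by omega)
end

section
/- The partial permutohedron P(2,n), which equals the convex hull of the points (0,0), (n,0), (0,n), (n,n-1), (n-1,n) in R^2, has Ehrhart polynomial ehr(t) = (n^2 - 1/2)t^2 + (2n - 1/2)t + 1 for every positive integer n ≥ 1. -/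
set_option maxHeartbeats 1000000


open Pointwise

/-- The partial permutohedron `P(2,n)`: the pentagon
`conv{(0,0),(n,0),(0,n),(n,n-1),(n-1,n)} ⊆ ℝ²`. -/
noncomputable def partialPermutohedron2 (n : ℕ) : Set (Fin 2 → ℝ) :=
  convexHull ℝ {![0, 0], ![(n : ℝ), 0], ![0, (n : ℝ)],
    ![(n : ℝ), (n : ℝ) - 1], ![(n : ℝ) - 1, (n : ℝ)]}

lemma geom (n t : ℕ) (hn : 1 ≤ n) (ht : 1 ≤ t) :
    (t : ℝ) • partialPermutohedron2 n =
      {p : Fin 2 → ℝ | 0 ≤ p 0 ∧ p 0 ≤ t * n ∧ 0 ≤ p 1 ∧ p 1 ≤ t * n ∧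
        p 0 + p 1 ≤ 2 * (t * n) - t} := by
  have hn' : (1:ℝ) ≤ n := by exact_mod_cast hn
  have ht' : (1:ℝ) ≤ t := by exact_mod_cast ht
  set N : ℝ := (t : ℝ) * n with hN
  have htN : (t:ℝ) ≤ N := by nlinarith
  have hN1 : (1:ℝ) ≤ N := by nlinarith
  rw [partialPermutohedron2, ← convexHull_smul]
  have hset : (t : ℝ) • ({![0, 0], ![(n : ℝ), 0], ![0, (n : ℝ)],
      ![(n : ℝ), (n : ℝ) - 1], ![(n : ℝ) - 1, (n : ℝ)]} : Set (Fin 2 → ℝ)) =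
      {![0, 0], ![N, 0], ![0, N], ![N, (t:ℝ) * ((n:ℝ) - 1)], ![(t:ℝ) * ((n:ℝ) - 1), N]} := by
    simp only [Set.smul_set_insert, Set.smul_set_singleton, Matrix.smul_cons,
      Matrix.smul_empty, smul_eq_mul, mul_zero, hN]
  rw [hset]
  apply Set.Subset.antisymm
  · apply convexHull_min
    · rintro p (rfl | rfl | rfl | rfl | rfl) <;>
        simp only [Set.mem_setOf_eq, Matrix.cons_val_zero, Matrix.cons_val_one,
          Matrix.head_cons] <;>
        refine ⟨?_, ?_, ?_, ?_, ?_⟩ <;> nlinarith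
    · rintro x ⟨hx0, hx1, hx2, hx3, hx4⟩ y ⟨hy0, hy1, hy2, hy3, hy4⟩ a b ha hb hab
      refine ⟨?_, ?_, ?_, ?_, ?_⟩ <;>
        simp only [Pi.add_apply, Pi.smul_apply, smul_eq_mul] <;>
        nlinarith [mul_le_mul_of_nonneg_left hx4 ha, mul_le_mul_of_nonneg_left hy4 hb]
  · rintro p ⟨h0, h1, h2, h3, h4⟩
    have hM : (t:ℝ) * ((n:ℝ) - 1) = N - t := by rw [hN]; ring
    set V : Set (Fin 2 → ℝ) := {![0, 0], ![N, 0], ![0, N],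
      ![N, (t:ℝ) * ((n:ℝ) - 1)], ![(t:ℝ) * ((n:ℝ) - 1), N]} with hV
    have hv0 : ![(0:ℝ), 0] ∈ convexHull ℝ V := subset_convexHull ℝ V (by simp [hV])
    have hv1 : ![N, (0:ℝ)] ∈ convexHull ℝ V := subset_convexHull ℝ V (by simp [hV])
    have hv2 : ![(0:ℝ), N] ∈ convexHull ℝ V := subset_convexHull ℝ V (by simp [hV])
    have hv3 : ![N, N - (t:ℝ)] ∈ convexHull ℝ V := by
      rw [← hM]; exact subset_convexHull ℝ V (by simp [hV])
    have hv4 : ![N - (t:ℝ), N] ∈ convexHull ℝ V := by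
      rw [← hM]; exact subset_convexHull ℝ V (by simp [hV])
    set s : ℝ := p 0 + p 1 with hs
    by_cases hcase : s ≤ N
    · -- triangle case
      rcases eq_or_lt_of_le (by linarith : (0:ℝ) ≤ s) with hs0 | hs0
      · have : p = ![0, 0] := by
          funext i; fin_cases i <;> simp <;> linarith
        rw [this]; exact hv0
      · set r : Fin 2 → ℝ := ![N * p 0 / s, N * p 1 / s] with hr
        have hrmem : r ∈ convexHull ℝ V := by
          apply (convex_convexHull ℝ V).segment_subset hv1 hv2
          refine ⟨p 0 / s, p 1 / s, div_nonneg (by linarith) (by linarith), div_nonneg (by linarith) (by linarith), ?_, ?_⟩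
          · field_simp; linarith
          · funext i; fin_cases i <;>
              simp [hr, Pi.smul_apply, smul_eq_mul] <;> ring
        have : p ∈ segment ℝ (![(0:ℝ), 0]) r := by
          refine ⟨1 - s / N, s / N, ?_, div_nonneg (by linarith) (by linarith), by ring, ?_⟩
          · have : s / N ≤ 1 := by
              rw [div_le_one (by linarith)]; linarith
            linarith
          · funext i; fin_cases i <;>
              simp [hr, Pi.smul_apply, smul_eq_mul] <;> field_simp <;> ring
        exact (convex_convexHull ℝ V).segment_subset hv0 hrmem this
    · -- quadrilateral case
      push_neg at hcase
      have htltN : (t:ℝ) < N := by linarith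
      have hdenom : (0:ℝ) < N - t := by linarith
      have hdenom2 : (0:ℝ) < 2 * N - s := by linarith
      set α : ℝ := (s - N) / (N - t) with hα
      have hα0 : 0 ≤ α := div_nonneg (by linarith) (by linarith)
      have hα1 : α ≤ 1 := by rw [div_le_one hdenom]; linarith
      set lam : ℝ := (N - p 1) / (2 * N - s) with hlam
      have hlam0 : 0 ≤ lam := div_nonneg (by linarith) (by linarith)
      have hlam1 : lam ≤ 1 := by rw [div_le_one hdenom2]; linarith
      have hq1 : ![N, s - N] ∈ convexHull ℝ V := by
        apply (convex_convexHull ℝ V).segment_subset hv1 hv3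
        refine ⟨1 - α, α, by linarith, hα0, by ring, ?_⟩
        funext i; fin_cases i <;>
          simp [hα, Pi.smul_apply, smul_eq_mul] <;> field_simp <;> ring
      have hq2 : ![s - N, N] ∈ convexHull ℝ V := by
        apply (convex_convexHull ℝ V).segment_subset hv2 hv4
        refine ⟨1 - α, α, by linarith, hα0, by ring, ?_⟩
        funext i; fin_cases i <;>
          simp [hα, Pi.smul_apply, smul_eq_mul] <;> field_simp <;> ring
      have : p ∈ segment ℝ (![N, s - N]) (![s - N, N]) := by
        refine ⟨lam, 1 - lam, hlam0, by linarith, by ring, ?_⟩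
        have hlamEq : lam * (2 * N - (p 0 + p 1)) = N - p 1 := by
          rw [hlam, ← hs]; exact div_mul_cancel₀ _ hdenom2.ne'
        funext i; fin_cases i
        · simp [Pi.smul_apply, smul_eq_mul, hs]; linear_combination hlamEq
        · simp [Pi.smul_apply, smul_eq_mul, hs]; linear_combination -hlamEq
      exact (convex_convexHull ℝ V).segment_subset hq1 hq2 this


lemma gaussQ (m : ℕ) : ∑ i ∈ Finset.range m, (i : ℚ) = m * (m - 1) / 2 := by
  induction m with
  | zero => simp
  | succ k ih =>
    rw [Finset.sum_range_succ, ih]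
    push_cast
    ring

lemma count (t N : ℕ) (ht : 1 ≤ t) (htN : t ≤ N) :
    ((((Finset.range (N+1)) ×ˢ (Finset.range (N+1))).filter
        (fun p => p.1 + p.2 + t ≤ 2 * N)).card : ℚ) =
      ((N : ℚ) + 1) ^ 2 - t * (t + 1) / 2 := by
  have key : ∀ a m c : ℕ, ((Finset.range m).filter (fun b => a + b + t ≤ c)).card
      = min m (c + 1 - (a + t)) := by
    intro a m c
    rw [show (Finset.range m).filter (fun b => a + b + t ≤ c)
        = Finset.range (min m (c + 1 - (a + t))) by
      ext b; simp only [Finset.mem_filter, Finset.mem_range]; omega, Finset.card_range]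
  have h1 : (((Finset.range (N+1)) ×ˢ (Finset.range (N+1))).filter
      (fun p => p.1 + p.2 + t ≤ 2 * N)).card
      = ∑ a ∈ Finset.range (N+1), min (N+1) (2*N + 1 - (a + t)) := by
    rw [Finset.card_filter, Finset.sum_product]
    refine Finset.sum_congr rfl fun a _ => ?_
    rw [← Finset.card_filter, key]
  rw [h1, Nat.cast_sum, Finset.range_eq_Ico,
    ← Finset.sum_Ico_consecutive _ (Nat.zero_le (N+1-t)) (by omega : N+1-t ≤ N+1)]
  have h2 : ∑ a ∈ Finset.Ico 0 (N+1-t), ((min (N+1) (2*N + 1 - (a + t)) : ℕ) : ℚ)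
      = ((N:ℚ) + 1 - t) * ((N:ℚ) + 1) := by
    have e1 : ∀ a ∈ Finset.Ico 0 (N+1-t), ((min (N+1) (2*N + 1 - (a + t)) : ℕ) : ℚ)
        = ((N:ℚ) + 1) := by
      intro a ha
      rw [Finset.mem_Ico] at ha
      rw [show min (N+1) (2*N + 1 - (a + t)) = N + 1 by omega]
      push_cast
      ring
    rw [Finset.sum_congr rfl e1, Finset.sum_const, Nat.card_Ico, Nat.sub_zero,
      nsmul_eq_mul, Nat.cast_sub (by omega : t ≤ N + 1)]
    push_cast
    ring
  have h3 : ∑ a ∈ Finset.Ico (N+1-t) (N+1), ((min (N+1) (2*N + 1 - (a + t)) : ℕ) : ℚ)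
      = t * N - t * (t - 1) / 2 := by
    rw [Finset.sum_Ico_eq_sum_range]
    have ht' : N + 1 - (N + 1 - t) = t := by omega
    rw [ht']
    have : ∀ i ∈ Finset.range t, ((min (N+1) (2*N + 1 - ((N+1-t+i) + t)) : ℕ) : ℚ)
        = (N : ℚ) - i := by
      intro i hi
      rw [Finset.mem_range] at hi
      rw [show min (N+1) (2*N + 1 - ((N+1-t+i) + t)) = N - i by omega,
        Nat.cast_sub (by omega)]
    rw [Finset.sum_congr rfl this, Finset.sum_sub_distrib, Finset.sum_const, Finset.card_range, gaussQ]
    push_cast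
    ring
  rw [h2, h3]
  ring


/-- for every positive integer `n`, the Ehrhart polynomial of `P(2,n)` is
`(n² - 1/2)t² + (2n - 1/2)t + 1`, i.e. the number of lattice points in the dilate
`t·P(2,n)` equals this for every nonnegative integer `t`. -/
theorem ehrhart_partialPermutohedron2 (n : ℕ) (hn : 1 ≤ n) (t : ℕ) :
    (Nat.card {x : Fin 2 → ℤ |
        (fun i => (x i : ℝ)) ∈ (t : ℝ) • partialPermutohedron2 n} : ℚ) =
      ((n : ℚ) ^ 2 - 1/2) * t ^ 2 + (2 * n - 1/2) * t + 1 := by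
  rcases Nat.eq_zero_or_pos t with rfl | ht
  · have hne : (partialPermutohedron2 n).Nonempty := by
      rw [partialPermutohedron2, convexHull_nonempty_iff]
      exact ⟨![0,0], by simp⟩
    have hz : (0 : ℝ) • partialPermutohedron2 n = 0 := Set.zero_smul_set hne
    have hset : {x : Fin 2 → ℤ |
        (fun i => (x i : ℝ)) ∈ ((0:ℕ) : ℝ) • partialPermutohedron2 n} = {0} := by
      ext x
      simp only [Nat.cast_zero, hz, Set.mem_setOf_eq, Set.mem_zero, Set.mem_singleton_iff]
      constructor
      · intro h
        funext i
        have := congrFun h i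
        simpa using this
      · rintro rfl
        funext i
        simp
    rw [hset, Nat.card_coe_set_eq, Set.ncard_singleton]
    norm_num
  · set N : ℕ := t * n with hNdef
    have htN : t ≤ N := Nat.le_mul_of_pos_right t hn
    set C : Finset (ℕ × ℕ) := ((Finset.range (N+1)) ×ˢ (Finset.range (N+1))).filter
      (fun p => p.1 + p.2 + t ≤ 2 * N) with hC
    set g : ℕ × ℕ → (Fin 2 → ℤ) := fun p => ![(p.1 : ℤ), (p.2 : ℤ)] with hg
    have hginj : Function.Injective g := by
      intro p q h
      have h0 := congrFun h 0
      have h1 := congrFun h 1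
      simp only [hg, Matrix.cons_val_zero, Matrix.cons_val_one, Matrix.head_cons] at h0 h1
      exact Prod.ext (by exact_mod_cast h0) (by exact_mod_cast h1)
    have hset : {x : Fin 2 → ℤ |
        (fun i => (x i : ℝ)) ∈ (t : ℝ) • partialPermutohedron2 n} = ↑(C.image g) := by
      ext x
      rw [Set.mem_setOf_eq, geom n t hn ht, Set.mem_setOf_eq]
      simp only [Finset.coe_image, Set.mem_image, Finset.mem_coe, hC, Finset.mem_filter,
        Finset.mem_product, Finset.mem_range]
      constructor
      · rintro ⟨h0, h1, h2, h3, h4⟩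
        have i0 : 0 ≤ x 0 := by exact_mod_cast h0
        have i1 : x 0 ≤ (N : ℤ) := by exact_mod_cast h1
        have i2 : 0 ≤ x 1 := by exact_mod_cast h2
        have i3 : x 1 ≤ (N : ℤ) := by exact_mod_cast h3
        have i4 : x 0 + x 1 + t ≤ 2 * N := by
          have : ((x 0 + x 1 + t : ℤ) : ℝ) ≤ ((2 * N : ℤ) : ℝ) := by
            push_cast [hNdef]; linarith
          exact_mod_cast this
        refine ⟨((x 0).toNat, (x 1).toNat), ⟨⟨by omega, by omega⟩, by omega⟩, ?_⟩
        funext i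
        fin_cases i <;> simp [hg, Int.toNat_of_nonneg, i0, i2]
      · rintro ⟨p, ⟨⟨hp1, hp2⟩, hp3⟩, rfl⟩
        have c1 : (p.1 : ℝ) ≤ N := by exact_mod_cast Nat.lt_succ_iff.mp hp1
        have c2 : (p.2 : ℝ) ≤ N := by exact_mod_cast Nat.lt_succ_iff.mp hp2
        have c3 : (p.1 : ℝ) + p.2 + t ≤ 2 * N := by exact_mod_cast hp3
        have hNR : ((N : ℕ) : ℝ) = (t : ℝ) * n := by rw [hNdef]; push_cast; ring
        simp only [hg, Matrix.cons_val_zero, Matrix.cons_val_one, Matrix.head_cons,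
          Int.cast_natCast]
        refine ⟨by positivity, by linarith, by positivity, by linarith, by linarith⟩
    rw [hset, Nat.card_coe_set_eq, Set.ncard_coe_finset,
      Finset.card_image_of_injective _ hginj]
    rw [count t N ht htN]
    simp only [hNdef]
    push_cast
    ring
end

section
/- For positive integers m and n, the partial permutohedron P(m,n) has exactly sum_{i=0}^{min(m,n)} m!/(m-i)! vertices, namely the vectors in R^m with zeros in some m-i positions and with the other i entries being n, n-1, ..., n-i+1 in some order, for i = 0,...,min(m,n). -/
open Pointwise

/-- The partial permutohedron `P(m,n) ⊆ ℝ^m`: the convex hull of all vectors in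
`{0,1,…,n}^m` whose nonzero entries are pairwise distinct. -/
noncomputable def partialPermutohedron (m n : ℕ) : Set (Fin m → ℝ) :=
  convexHull ℝ {x : Fin m → ℝ | ∃ y : Fin m → ℕ,
    (∀ i, y i ≤ n) ∧
    (∀ i j, i ≠ j → y i ≠ 0 → y j ≠ 0 → y i ≠ y j) ∧
    x = fun i => (y i : ℝ)}

open Finset

/-- Sum of a finset of distinct values in `[1,n]` is at most the top-segment sum. -/
lemma aux_sum_finset_le (T : Finset ℕ) : ∀ n : ℕ, T ⊆ Finset.Icc 1 n →
    ∑ x ∈ T, x ≤ ∑ i ∈ Finset.range T.card, (n - i) := by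
  induction T using Finset.strongInduction with
  | _ T ih =>
    intro n hT
    rcases T.eq_empty_or_nonempty with rfl | hne
    · simp
    · set M := T.max' hne with hM
      have hMT : M ∈ T := T.max'_mem hne
      have hMn : M ≤ n := (Finset.mem_Icc.1 (hT hMT)).2
      have hsub : T.erase M ⊂ T := Finset.erase_ssubset hMT
      have herase : T.erase M ⊆ Finset.Icc 1 (n - 1) := by
        intro x hx
        have hxT := Finset.mem_of_mem_erase hx
        have hx1 := (Finset.mem_Icc.1 (hT hxT)).1
        have hxM : x < M := lt_of_le_of_ne (T.le_max' x hxT) (Finset.ne_of_mem_erase hx)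
        exact Finset.mem_Icc.2 ⟨hx1, by omega⟩
      have hIH := ih (T.erase M) hsub (n - 1) herase
      have hcard : (T.erase M).card = T.card - 1 := Finset.card_erase_of_mem hMT
      rw [hcard] at hIH
      have hcpos : 1 ≤ T.card := Finset.card_pos.2 hne
      have hsum : ∑ x ∈ T, x = M + ∑ x ∈ T.erase M, x := (Finset.add_sum_erase _ _ hMT).symm
      have hstep : ∑ i ∈ Finset.range (T.card - 1), (n - 1 - i) ≤
          ∑ i ∈ Finset.range (T.card - 1), (n - (i + 1)) := by
        apply Finset.sum_le_sum; intro i _; omega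
      have : ∑ i ∈ Finset.range T.card, (n - i) =
          n + ∑ i ∈ Finset.range (T.card - 1), (n - (i + 1)) := by
        obtain ⟨c, hc⟩ : ∃ c, T.card = c + 1 := ⟨T.card - 1, by omega⟩
        rw [hc]
        simp [Finset.sum_range_succ']
        omega
      omega

/-- Partial sums bound. -/
lemma aux_partial (n k : ℕ) (a : ℕ → ℕ) (ha : ∀ j, j < k → a j ≤ n)
    (hd : ∀ j j', j < k → j' < k → j ≠ j' → a j ≠ 0 → a j' ≠ 0 → a j ≠ a j') :
    ∀ t, t ≤ k → ∑ j ∈ Finset.range t, a j ≤ ∑ i ∈ Finset.range t, (n - i) := by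
  intro t ht
  set s := (Finset.range t).filter (a · ≠ 0) with hs
  have hinj : Set.InjOn a s := by
    intro j hj j' hj' hjj'
    simp only [hs, Finset.coe_filter, Set.mem_setOf_eq, Finset.mem_range] at hj hj'
    by_contra hne
    exact hd j j' (by omega) (by omega) hne hj.2 hj'.2 hjj'
  have h1 : ∑ j ∈ Finset.range t, a j = ∑ j ∈ s, a j := (Finset.sum_filter_ne_zero _).symm
  have h2 : ∑ x ∈ s.image a, x = ∑ j ∈ s, a j :=
    Finset.sum_image (fun x hx y hy h => hinj hx hy h)
  have h3 : s.image a ⊆ Finset.Icc 1 n := by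
    intro x hx
    obtain ⟨j, hj, rfl⟩ := Finset.mem_image.1 hx
    simp only [hs, Finset.mem_filter, Finset.mem_range] at hj
    exact Finset.mem_Icc.2 ⟨by omega, ha j (by omega)⟩
  have h4 := aux_sum_finset_le (s.image a) n h3
  have h5 : (s.image a).card ≤ t := by
    calc (s.image a).card ≤ s.card := Finset.card_image_le
    _ ≤ (Finset.range t).card := Finset.card_filter_le _ _
    _ = t := Finset.card_range t
  have h6 : ∑ i ∈ Finset.range (s.image a).card, (n - i) ≤ ∑ i ∈ Finset.range t, (n - i) :=
    Finset.sum_le_sum_of_subset (Finset.range_subset_range.2 h5)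
  omega
open Finset

/-- Abel-type identity. -/
lemma aux_identity (a : ℕ → ℕ) : ∀ k : ℕ,
    ∑ j ∈ Finset.range k, 2 ^ (k - j) * a j =
      (∑ j ∈ Finset.range k, a j) +
        ∑ t ∈ Finset.range k, 2 ^ (k - 1 - t) * ∑ j ∈ Finset.range (t + 1), a j := by
  intro k
  induction k with
  | zero => simp
  | succ k ih =>
    have hL : ∑ j ∈ Finset.range (k+1), 2 ^ (k+1 - j) * a j =
        2 * (∑ j ∈ Finset.range k, 2 ^ (k - j) * a j) + 2 * a k := by
      rw [Finset.sum_range_succ]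
      have e1 : ∑ j ∈ Finset.range k, 2 ^ (k+1 - j) * a j =
          ∑ j ∈ Finset.range k, 2 * (2 ^ (k - j) * a j) := by
        apply Finset.sum_congr rfl
        intro j hj
        have : k + 1 - j = (k - j) + 1 := by
          have := Finset.mem_range.1 hj; omega
        rw [this, pow_succ]; ring
      rw [e1, ← Finset.mul_sum]
      have : k + 1 - k = 1 := by omega
      rw [this]; ring
    have hR : ∑ t ∈ Finset.range (k+1), 2 ^ (k + 1 - 1 - t) * ∑ j ∈ Finset.range (t + 1), a j =
        2 * (∑ t ∈ Finset.range k, 2 ^ (k - 1 - t) * ∑ j ∈ Finset.range (t + 1), a j)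
          + ∑ j ∈ Finset.range (k+1), a j := by
      rw [Finset.sum_range_succ]
      have e1 : ∑ t ∈ Finset.range k, 2 ^ (k + 1 - 1 - t) * ∑ j ∈ Finset.range (t + 1), a j =
          ∑ t ∈ Finset.range k, 2 * (2 ^ (k - 1 - t) * ∑ j ∈ Finset.range (t + 1), a j) := by
        apply Finset.sum_congr rfl
        intro t ht
        have ht' := Finset.mem_range.1 ht
        have : k + 1 - 1 - t = (k - 1 - t) + 1 := by omega
        rw [this, pow_succ]; ring
      rw [e1, ← Finset.mul_sum]
      have : k + 1 - 1 - k = 0 := by omega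
      rw [this]; ring
    rw [hL, hR, ih]
    have hS : ∑ j ∈ Finset.range (k+1), a j = (∑ j ∈ Finset.range k, a j) + a k :=
      Finset.sum_range_succ a k
    rw [hS]; ring

/-- Key lemma: inequality and equality case for the weighted sum. -/
lemma aux_key (n k : ℕ) (hk : k ≤ n) (a : ℕ → ℕ) (ha : ∀ j, j < k → a j ≤ n)
    (hd : ∀ j j', j < k → j' < k → j ≠ j' → a j ≠ 0 → a j' ≠ 0 → a j ≠ a j') :
    (∑ j ∈ Finset.range k, 2 ^ (k - j) * a j ≤ ∑ j ∈ Finset.range k, 2 ^ (k - j) * (n - j)) ∧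
    (∑ j ∈ Finset.range k, 2 ^ (k - j) * a j = ∑ j ∈ Finset.range k, 2 ^ (k - j) * (n - j) →
      ∀ j, j < k → a j = n - j) := by
  have hb : ∀ t, t ≤ k → ∑ j ∈ Finset.range t, a j ≤ ∑ i ∈ Finset.range t, (n - i) :=
    aux_partial n k a ha hd
  have hIa := aux_identity a k
  have hIb := aux_identity (fun j => n - j) k
  have hterm : ∀ t ∈ Finset.range k,
      2 ^ (k - 1 - t) * ∑ j ∈ Finset.range (t + 1), a j ≤
        2 ^ (k - 1 - t) * ∑ i ∈ Finset.range (t + 1), (n - i) := by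
    intro t ht
    exact Nat.mul_le_mul_left _ (hb (t+1) (Finset.mem_range.1 ht))
  have hsum2 : ∑ t ∈ Finset.range k, 2 ^ (k - 1 - t) * ∑ j ∈ Finset.range (t + 1), a j ≤
      ∑ t ∈ Finset.range k, 2 ^ (k - 1 - t) * ∑ i ∈ Finset.range (t + 1), (n - i) :=
    Finset.sum_le_sum hterm
  have hSk := hb k le_rfl
  constructor
  · rw [hIa, hIb]; exact Nat.add_le_add hSk hsum2
  · intro heq
    rw [hIa, hIb] at heq
    have h2 : ∑ t ∈ Finset.range k, 2 ^ (k - 1 - t) * ∑ j ∈ Finset.range (t + 1), a j =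
        ∑ t ∈ Finset.range k, 2 ^ (k - 1 - t) * ∑ i ∈ Finset.range (t + 1), (n - i) := by
      omega
    have h3 := (Finset.sum_eq_sum_iff_of_le hterm).1 h2
    have h4 : ∀ t, t < k → ∑ j ∈ Finset.range (t + 1), a j = ∑ i ∈ Finset.range (t + 1), (n - i) := by
      intro t ht
      have := h3 t (Finset.mem_range.2 ht)
      have hpos : 0 < 2 ^ (k - 1 - t) := Nat.pow_pos (by norm_num)
      exact Nat.eq_of_mul_eq_mul_left hpos this
    intro j hj
    have h5 := h4 j hj
    have h6 : ∑ x ∈ Finset.range j, a x = ∑ i ∈ Finset.range j, (n - i) := by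
      rcases Nat.eq_zero_or_pos j with rfl | hjpos
      · simp
      · have := h4 (j - 1) (by omega)
        have hj1 : j - 1 + 1 = j := by omega
        rwa [hj1] at this
    rw [Finset.sum_range_succ, Finset.sum_range_succ, h6] at h5
    omega

lemma aux_exposed {E : Type*} [AddCommGroup E] [Module ℝ E] {s : Set E} {x : E}
    (l : E →ₗ[ℝ] ℝ) (hx : x ∈ s) (hle : ∀ v ∈ s, l v ≤ l x)
    (huniq : ∀ v ∈ s, l v = l x → v = x) :
    x ∈ Set.extremePoints ℝ (convexHull ℝ s) := by
  have hconv : Convex ℝ {w : E | l w ≤ l x} := convex_halfSpace_le l.isLinear _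
  have hull_le : ∀ p ∈ convexHull ℝ s, l p ≤ l x := fun p hp =>
    convexHull_min hle hconv hp
  have hull_eq : ∀ p ∈ convexHull ℝ s, l p = l x → p = x := by
    intro p hp hlp
    rw [_root_.convexHull_eq] at hp
    obtain ⟨ι, t, w, z, hw0, hw1, hz, hp⟩ := hp
    rw [Finset.centerMass_eq_of_sum_1 _ _ hw1] at hp
    have hlsum : ∑ i ∈ t, w i * l (z i) = l x := by
      rw [← hlp, ← hp, map_sum]
      simp [smul_eq_mul]
    have hterm : ∀ i ∈ t, w i * l (z i) ≤ w i * l x := fun i hi =>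
      mul_le_mul_of_nonneg_left (hle _ (hz i hi)) (hw0 i hi)
    have hsum2 : ∑ i ∈ t, w i * l x = l x := by
      rw [← Finset.sum_mul, hw1, one_mul]
    have hall : ∀ i ∈ t, w i * l (z i) = w i * l x :=
      (Finset.sum_eq_sum_iff_of_le hterm).1 (by rw [hlsum, hsum2])
    have hzx : ∀ i ∈ t, w i • z i = w i • x := by
      intro i hi
      rcases eq_or_ne (w i) 0 with h0 | h0
      · rw [h0, zero_smul, zero_smul]
      · have : l (z i) = l x := mul_left_cancel₀ h0 (hall i hi)
        rw [huniq _ (hz i hi) this]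
    calc p = ∑ i ∈ t, w i • z i := hp.symm
      _ = ∑ i ∈ t, w i • x := Finset.sum_congr rfl hzx
      _ = (∑ i ∈ t, w i) • x := (Finset.sum_smul).symm
      _ = x := by rw [hw1, one_smul]
  rw [mem_extremePoints]
  refine ⟨subset_convexHull ℝ s hx, ?_⟩
  intro x₁ h₁ x₂ h₂ hseg
  obtain ⟨a, b, ha, hb, hab, hxab⟩ := hseg
  have hl1 : l x₁ ≤ l x := hull_le _ h₁
  have hl2 : l x₂ ≤ l x := hull_le _ h₂
  have hlx : a * l x₁ + b * l x₂ = l x := by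
    rw [← hxab]; simp [smul_eq_mul]
  have key : a * l x + b * l x = l x := by rw [← add_mul, hab, one_mul]
  have he1 : l x₁ = l x := by
    by_contra h
    have h1 : l x₁ < l x := lt_of_le_of_ne hl1 h
    have := add_lt_add_of_lt_of_le (mul_lt_mul_of_pos_left h1 ha)
      (mul_le_mul_of_nonneg_left hl2 hb.le)
    linarith
  have he2 : l x₂ = l x := by
    by_contra h
    have h2 : l x₂ < l x := lt_of_le_of_ne hl2 h
    have := add_lt_add_of_le_of_lt (mul_le_mul_of_nonneg_left hl1 ha.le)
      (mul_lt_mul_of_pos_left h2 hb)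
    linarith
  exact ⟨hull_eq _ h₁ he1, hull_eq _ h₂ he2⟩
open Finset

section A
variable {m n k : ℕ}

/-- The weight vector. -/
noncomputable def auxC (n : ℕ) {m k : ℕ} (f : Fin k ↪ Fin m) : Fin m → ℝ :=
  fun i => if h : ∃ j, f j = i then (2 : ℝ) ^ (k - (Classical.choose h : Fin k).val) else -1

lemma auxC_apply (f : Fin k ↪ Fin m) (j : Fin k) :
    auxC n f (f j) = (2 : ℝ) ^ (k - j.val) := by
  have h : ∃ j', f j' = f j := ⟨j, rfl⟩
  have hc : Classical.choose h = j := f.injective (Classical.choose_spec h)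
  simp only [auxC, dif_pos h, hc]

lemma auxC_apply_not (f : Fin k ↪ Fin m) (i : Fin m) (h : ∀ j, f j ≠ i) :
    auxC n f i = -1 := by
  simp only [auxC, dif_neg (not_exists.2 h)]

/-- The linear functional. -/
noncomputable def auxL (n : ℕ) {m k : ℕ} (f : Fin k ↪ Fin m) : (Fin m → ℝ) →ₗ[ℝ] ℝ where
  toFun y := ∑ i, auxC n f i * y i
  map_add' y z := by simp [mul_add, Finset.sum_add_distrib]
  map_smul' r y := by
    simp only [Pi.smul_apply, smul_eq_mul, RingHom.id_apply, Finset.mul_sum]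
    apply Finset.sum_congr rfl; intros; ring

lemma aux_mem_extreme (m n : ℕ) (k : ℕ) (hk : k ≤ min m n) (f : Fin k ↪ Fin m)
    (x : Fin m → ℝ) (hf : ∀ j : Fin k, x (f j) = (n : ℝ) - (j : ℕ))
    (hz : ∀ i, (∀ j, f j ≠ i) → x i = 0) :
    x ∈ Set.extremePoints ℝ (partialPermutohedron m n) := by
  have hkm : k ≤ m := hk.trans (min_le_left _ _)
  have hkn : k ≤ n := hk.trans (min_le_right _ _)
  set V : Set (Fin m → ℝ) := {x : Fin m → ℝ | ∃ y : Fin m → ℕ,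
    (∀ i, y i ≤ n) ∧
    (∀ i j, i ≠ j → y i ≠ 0 → y j ≠ 0 → y i ≠ y j) ∧
    x = fun i => (y i : ℝ)} with hV
  set l := auxL n f with hl
  set A : Finset (Fin m) := Finset.univ.map f with hA
  have hmemA : ∀ i : Fin m, i ∈ A ↔ ∃ j, f j = i := by
    intro i; simp [hA]
  -- value of l on a V-vector
  have hlval : ∀ y : Fin m → ℕ,
      l (fun i => (y i : ℝ)) = (∑ j : Fin k, (2:ℝ) ^ (k - j.val) * (y (f j) : ℝ))
        - ∑ i ∈ Aᶜ, (y i : ℝ) := by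
    intro y
    have hsplit : ∑ i ∈ A, auxC n f i * (y i : ℝ) + ∑ i ∈ Aᶜ, auxC n f i * (y i : ℝ)
        = ∑ i, auxC n f i * (y i : ℝ) := Finset.sum_add_sum_compl A _
    have h1 : ∑ i ∈ A, auxC n f i * (y i : ℝ) =
        ∑ j : Fin k, (2:ℝ) ^ (k - j.val) * (y (f j) : ℝ) := by
      rw [hA, Finset.sum_map]
      apply Finset.sum_congr rfl
      intro j _
      rw [auxC_apply]
    have h2 : ∑ i ∈ Aᶜ, auxC n f i * (y i : ℝ) = -∑ i ∈ Aᶜ, (y i : ℝ) := by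
      rw [← Finset.sum_neg_distrib]
      apply Finset.sum_congr rfl
      intro i hi
      have : ∀ j, f j ≠ i := by
        intro j hj
        exact (Finset.mem_compl.1 hi) ((hmemA i).2 ⟨j, hj⟩)
      rw [auxC_apply_not f i this]; ring
    have : l (fun i => (y i : ℝ)) = ∑ i, auxC n f i * (y i : ℝ) := rfl
    rw [this, ← hsplit, h1, h2]; ring
  -- x as a V-vector
  set y0 : Fin m → ℕ := fun i => if h : ∃ j, f j = i then n - (Classical.choose h : Fin k).val else 0
    with hy0
  have hy0f : ∀ j : Fin k, y0 (f j) = n - j.val := by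
    intro j
    have h : ∃ j', f j' = f j := ⟨j, rfl⟩
    have hc : Classical.choose h = j := f.injective (Classical.choose_spec h)
    simp only [hy0, dif_pos h, hc]
  have hy0n : ∀ i, (∀ j, f j ≠ i) → y0 i = 0 := by
    intro i h
    simp only [hy0, dif_neg (not_exists.2 h)]
  have hxy0 : x = fun i => (y0 i : ℝ) := by
    funext i
    by_cases h : ∃ j, f j = i
    · obtain ⟨j, rfl⟩ := h
      rw [hf j, hy0f j]
      have : (j : ℕ) ≤ n := le_of_lt (lt_of_lt_of_le j.isLt hkn)
      push_cast [Nat.cast_sub this]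
      ring
    · push_neg at h
      rw [hz i h, hy0n i h]
      simp
  have hxV : x ∈ V := by
    refine ⟨y0, ?_, ?_, hxy0⟩
    · intro i
      by_cases h : ∃ j, f j = i
      · obtain ⟨j, rfl⟩ := h; rw [hy0f]; omega
      · push_neg at h; rw [hy0n i h]; omega
    · intro i i' hii' hi hi'
      rcases Classical.em (∃ j, f j = i) with ⟨j, rfl⟩ | h
      · rcases Classical.em (∃ j', f j' = i') with ⟨j', rfl⟩ | h'
        · rw [hy0f, hy0f]
          rw [hy0f] at hi hi'
          have hjj' : j ≠ j' := fun hjeq => hii' (by rw [hjeq])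
          have : j.val ≠ j'.val := fun hv => hjj' (Fin.ext hv)
          have hj1 : j.val < k := j.isLt
          have hj2 : j'.val < k := j'.isLt
          omega
        · push_neg at h'; rw [hy0n i' h'] at hi'; exact absurd rfl hi'
      · push_neg at h; rw [hy0n i h] at hi; exact absurd rfl hi
  -- the value l x
  have hlx : l x = ∑ j : Fin k, (2:ℝ) ^ (k - j.val) * ((n : ℕ) - (j:ℕ) : ℕ) := by
    rw [hxy0, hlval y0]
    have h0 : ∑ i ∈ Aᶜ, (y0 i : ℝ) = 0 := by
      apply Finset.sum_eq_zero
      intro i hi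
      have : ∀ j, f j ≠ i := fun j hj => (Finset.mem_compl.1 hi) ((hmemA i).2 ⟨j, hj⟩)
      rw [hy0n i this]; simp
    rw [h0, sub_zero]
    apply Finset.sum_congr rfl
    intro j _
    rw [hy0f]
  -- main estimates
  have hmain : ∀ v ∈ V, l v ≤ l x ∧ (l v = l x → v = x) := by
    rintro v ⟨y, hyn, hyd, rfl⟩
    set a : ℕ → ℕ := fun j => if h : j < k then y (f ⟨j, h⟩) else 0 with ha
    have hab : ∀ j, j < k → a j ≤ n := by
      intro j hj; simp only [ha, dif_pos hj]; exact hyn _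
    have had : ∀ j j', j < k → j' < k → j ≠ j' → a j ≠ 0 → a j' ≠ 0 → a j ≠ a j' := by
      intro j j' hj hj' hne hz1 hz2
      simp only [ha, dif_pos hj, dif_pos hj'] at hz1 hz2 ⊢
      refine hyd _ _ ?_ hz1 hz2
      intro heq
      exact hne (congrArg Fin.val (f.injective heq))
    obtain ⟨hineq, heqc⟩ := aux_key n k hkn a hab had
    -- cast sums
    have hcast1 : ∑ j : Fin k, (2:ℝ) ^ (k - j.val) * (y (f j) : ℝ)
        = ((∑ j ∈ Finset.range k, 2 ^ (k - j) * a j : ℕ) : ℝ) := by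
      push_cast
      rw [← Fin.sum_univ_eq_sum_range (fun j => (2:ℝ) ^ (k - j) * (a j : ℝ)) k]
      apply Finset.sum_congr rfl
      intro j _
      have : a j.val = y (f j) := by simp only [ha, dif_pos j.isLt, Fin.eta]
      rw [this]
    have hcast2 : ∑ j : Fin k, (2:ℝ) ^ (k - j.val) * ((n : ℕ) - (j:ℕ) : ℕ)
        = ((∑ j ∈ Finset.range k, 2 ^ (k - j) * (n - j) : ℕ) : ℝ) := by
      push_cast
      rw [← Fin.sum_univ_eq_sum_range (fun j => (2:ℝ) ^ (k - j) * ((n - j : ℕ) : ℝ)) k]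
    have hoff : (0:ℝ) ≤ ∑ i ∈ Aᶜ, (y i : ℝ) :=
      Finset.sum_nonneg fun i _ => Nat.cast_nonneg _
    have hlv := hlval y
    constructor
    · rw [hlv, hlx, hcast1, hcast2]
      have : ((∑ j ∈ Finset.range k, 2 ^ (k - j) * a j : ℕ) : ℝ)
          ≤ ((∑ j ∈ Finset.range k, 2 ^ (k - j) * (n - j) : ℕ) : ℝ) := Nat.cast_le.2 hineq
      linarith
    · intro hveq
      rw [hlv, hlx, hcast1, hcast2] at hveq
      have hc1 : ((∑ j ∈ Finset.range k, 2 ^ (k - j) * a j : ℕ) : ℝ)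
          ≤ ((∑ j ∈ Finset.range k, 2 ^ (k - j) * (n - j) : ℕ) : ℝ) := Nat.cast_le.2 hineq
      have hNeq : ((∑ j ∈ Finset.range k, 2 ^ (k - j) * a j : ℕ) : ℝ)
          = ((∑ j ∈ Finset.range k, 2 ^ (k - j) * (n - j) : ℕ) : ℝ) := by linarith
      have hoff0 : ∑ i ∈ Aᶜ, (y i : ℝ) = 0 := by linarith
      have hNeqN := Nat.cast_injective hNeq
      have hvals := heqc hNeqN
      have hyoff : ∀ i ∈ Aᶜ, y i = 0 := by
        intro i hi
        have := (Finset.sum_eq_zero_iff_of_nonneg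
          (fun i _ => Nat.cast_nonneg (y i) : ∀ i ∈ Aᶜ, (0:ℝ) ≤ (y i : ℝ))).1 hoff0 i hi
        exact_mod_cast this
      rw [hxy0]
      funext i
      by_cases h : ∃ j, f j = i
      · obtain ⟨j, rfl⟩ := h
        have h1 : a j.val = y (f j) := by simp only [ha, dif_pos j.isLt, Fin.eta]
        have h2 := hvals j.val j.isLt
        rw [hy0f j, ← h1, h2]
      · push_neg at h
        have hiA : i ∈ Aᶜ := Finset.mem_compl.2 (fun hiA => h _ ((hmemA i).1 hiA).choose_spec)
        rw [hyoff i hiA, hy0n i h]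
  -- conclude
  have := aux_exposed (s := V) l hxV (fun v hv => (hmain v hv).1) (fun v hv => (hmain v hv).2)
  rw [partialPermutohedron]
  exact this

end A
section B
open Finset Classical in
lemma aux_extreme_sub (m n : ℕ) (hn : 1 ≤ n) (x : Fin m → ℝ)
    (hx : x ∈ Set.extremePoints ℝ (partialPermutohedron m n)) :
    ∃ (k : ℕ) (_ : k ≤ min m n) (f : Fin k ↪ Fin m),
      (∀ j : Fin k, x (f j) = (n : ℝ) - (j : ℕ)) ∧
      ∀ i : Fin m, (∀ j, f j ≠ i) → x i = 0 := by
  have hxV : x ∈ {x : Fin m → ℝ | ∃ y : Fin m → ℕ,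
      (∀ i, y i ≤ n) ∧
      (∀ i j, i ≠ j → y i ≠ 0 → y j ≠ 0 → y i ≠ y j) ∧
      x = fun i => (y i : ℝ)} := by
    rw [partialPermutohedron] at hx
    exact extremePoints_convexHull_subset (𝕜 := ℝ) hx
  obtain ⟨y, hyn, hyd, rfl⟩ := hxV
  set T : Finset ℕ := (Finset.univ.image y).erase 0 with hT
  have hmemT : ∀ v, v ∈ T ↔ v ≠ 0 ∧ ∃ i, y i = v := by
    intro v
    rw [hT, Finset.mem_erase]
    simp [Finset.mem_image]
  have hT1n : T ⊆ Finset.Icc 1 n := by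
    intro v hv
    obtain ⟨hv0, i, rfl⟩ := (hmemT v).1 hv
    exact Finset.mem_Icc.2 ⟨by omega, hyn i⟩
  by_cases hC : ∀ v ∈ T, v < n → v + 1 ∈ T
  -- Case 1: values form a top segment
  · have hup : ∀ d v, v ∈ T → v + d ≤ n → v + d ∈ T := by
      intro d
      induction d with
      | zero => intro v hv _; simpa using hv
      | succ d ih =>
        intro v hv hd
        have h1 : v + d ∈ T := ih v hv (by omega)
        have h2 : v + d < n := by omega
        have h3 := hC (v + d) h1 h2
        have he : v + (d + 1) = v + d + 1 := by omega
        rw [he]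
        exact h3
    set k := T.card with hk
    have hkn : k ≤ n := by
      have := Finset.card_le_card hT1n
      simpa [Nat.card_Icc] using this
    set s : Finset (Fin m) := Finset.univ.filter (fun i => y i ≠ 0) with hs
    have hTs : T = s.image y := by
      ext v
      rw [hmemT]
      simp only [hs, Finset.mem_image, Finset.mem_filter, Finset.mem_univ, true_and]
      constructor
      · rintro ⟨hv0, i, rfl⟩; exact ⟨i, hv0, rfl⟩
      · rintro ⟨i, hi0, rfl⟩; exact ⟨hi0, i, rfl⟩
    have hks : T.card = s.card := by
      rw [hTs]
      apply Finset.card_image_of_injOn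
      intro i hi i' hi' hii'
      by_contra hne
      simp only [hs, Finset.coe_filter, Set.mem_setOf_eq] at hi hi'
      exact hyd i i' hne hi.2 hi'.2 hii'
    have hkm : k ≤ m := by
      rw [hk, hks]
      calc s.card ≤ Finset.univ.card := Finset.card_le_card (Finset.subset_univ s)
      _ = m := by simp
    have hTIoc : T = Finset.Ioc (n - k) n := by
      apply Finset.eq_of_subset_of_card_le
      · intro v hv
        have hv1 : 1 ≤ v := (Finset.mem_Icc.1 (hT1n hv)).1
        have hvn : v ≤ n := (Finset.mem_Icc.1 (hT1n hv)).2
        have hsub : Finset.Icc v n ⊆ T := by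
          intro u hu
          obtain ⟨hu1, hu2⟩ := Finset.mem_Icc.1 hu
          have : v + (u - v) = u := by omega
          rw [← this]
          exact hup (u - v) v hv (by omega)
        have hcard := Finset.card_le_card hsub
        rw [Nat.card_Icc] at hcard
        refine Finset.mem_Ioc.2 ⟨by omega, hvn⟩
      · rw [Nat.card_Ioc]; omega
    have hex : ∀ j : Fin k, ∃ i : Fin m, y i = n - j.val := by
      intro j
      have hjmem : n - j.val ∈ T := by
        rw [hTIoc]
        refine Finset.mem_Ioc.2 ⟨by omega, by omega⟩
      obtain ⟨_, i, hi⟩ := (hmemT _).1 hjmem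
      exact ⟨i, hi⟩
    choose g hg using hex
    have hgne : ∀ j : Fin k, y (g j) ≠ 0 := by
      intro j; rw [hg]; omega
    have hinj : Function.Injective g := by
      intro j j' hjj'
      have : y (g j) = y (g j') := by rw [hjj']
      rw [hg, hg] at this
      have hj1 : j.val < k := j.isLt
      have hj2 : j'.val < k := j'.isLt
      exact Fin.ext (by omega)
    refine ⟨k, le_min hkm hkn, ⟨g, hinj⟩, ?_, ?_⟩
    · intro j
      show (y (g j) : ℝ) = (n : ℝ) - (j : ℕ)
      rw [hg]
      have : (j : ℕ) ≤ n := by omega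
      push_cast [Nat.cast_sub this]
      ring
    · intro i hi
      show (y i : ℝ) = 0
      by_contra h0
      have hyi : y i ≠ 0 := fun h => h0 (by rw [h]; simp)
      have hiT : y i ∈ T := (hmemT _).2 ⟨hyi, i, rfl⟩
      rw [hTIoc] at hiT
      obtain ⟨hgt, hle⟩ := Finset.mem_Ioc.1 hiT
      have hj0 : n - y i < k := by omega
      set j0 : Fin k := ⟨n - y i, hj0⟩ with hj0'
      have hval : y (g j0) = y i := by rw [hg]; simp [hj0']; omega
      have : g j0 = i := by
        by_contra hne
        exact hyd (g j0) i hne (hgne j0) hyi hval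
      exact hi j0 this
  -- Case 2: not a top segment, contradiction with extremality
  · exfalso
    push_neg at hC
    obtain ⟨v, hvT, hvn, hv1T⟩ := hC
    have hv1 : 1 ≤ v := (Finset.mem_Icc.1 (hT1n hvT)).1
    set Q : ℕ → Prop := fun d => Finset.Icc (v - d) v ⊆ T with hQ
    have hQ0 : Q 0 := by
      intro u hu
      have : u = v := by simp at hu; omega
      rwa [this]
    set D := Nat.findGreatest Q v with hD
    have hQD : Q D := Nat.findGreatest_spec (Nat.zero_le v) hQ0
    have hDv : D ≤ v := Nat.findGreatest_le v
    set a := v - D with ha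
    have hav : a ≤ v := by omega
    have haT : a ∈ T := hQD (Finset.mem_Icc.2 ⟨le_rfl, hav⟩)
    have ha1 : 1 ≤ a := (Finset.mem_Icc.1 (hT1n haT)).1
    have ha0 : a - 1 ∉ T := by
      intro hmem
      have hDlt : D < v := by omega
      have hQD1 : Q (D + 1) := by
        intro u hu
        obtain ⟨hu1, hu2⟩ := Finset.mem_Icc.1 hu
        rcases Nat.eq_or_lt_of_le hu1 with heq | hlt
        · have : u = a - 1 := by omega
          rwa [this]
        · exact hQD (Finset.mem_Icc.2 ⟨by omega, hu2⟩)
      exact Nat.findGreatest_is_greatest (P := Q) (n := v) (k := D + 1)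
        (by omega) (by omega) hQD1
    -- the two perturbed vectors
    set yp : Fin m → ℕ := fun i => if a ≤ y i ∧ y i ≤ v then y i + 1 else y i with hyp
    set ym : Fin m → ℕ := fun i => if a ≤ y i ∧ y i ≤ v then y i - 1 else y i with hym
    have hyiT : ∀ i, y i ≠ 0 → y i ∈ T := fun i h => (hmemT _).2 ⟨h, i, rfl⟩
    have hypV : (fun i => (yp i : ℝ)) ∈ {x : Fin m → ℝ | ∃ y : Fin m → ℕ,
        (∀ i, y i ≤ n) ∧ (∀ i j, i ≠ j → y i ≠ 0 → y j ≠ 0 → y i ≠ y j) ∧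
        x = fun i => (y i : ℝ)} := by
      refine ⟨yp, ?_, ?_, rfl⟩
      · intro i
        simp only [hyp]
        split_ifs with h
        · omega
        · exact hyn i
      · intro i i' hne h1 h2 heq
        simp only [hyp] at h1 h2 heq
        split_ifs at h1 h2 heq with hb hb' hb'
        · exact hyd i i' hne (by omega) (by omega) (by omega)
        · -- y i + 1 = y i', y i' not in block
          have : y i' = v + 1 := by omega
          exact hv1T (this ▸ hyiT i' h2)
        · have : y i = v + 1 := by omega
          exact hv1T (this ▸ hyiT i h1)
        · exact hyd i i' hne h1 h2 heq
    have hymV : (fun i => (ym i : ℝ)) ∈ {x : Fin m → ℝ | ∃ y : Fin m → ℕ,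
        (∀ i, y i ≤ n) ∧ (∀ i j, i ≠ j → y i ≠ 0 → y j ≠ 0 → y i ≠ y j) ∧
        x = fun i => (y i : ℝ)} := by
      refine ⟨ym, ?_, ?_, rfl⟩
      · intro i
        simp only [hym]
        split_ifs with h
        · omega
        · exact hyn i
      · intro i i' hne h1 h2 heq
        simp only [hym] at h1 h2 heq
        split_ifs at h1 h2 heq with hb hb' hb'
        · exact hyd i i' hne (by omega) (by omega) (by omega)
        · -- y i - 1 = y i' ≠ 0, y i' not in block
          have : y i' = a - 1 := by omega
          exact ha0 (this ▸ hyiT i' h2)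
        · have : y i = a - 1 := by omega
          exact ha0 (this ▸ hyiT i h1)
        · exact hyd i i' hne h1 h2 heq
    -- x is the midpoint
    have hseg : (fun i => (y i : ℝ)) ∈
        openSegment ℝ (fun i => (yp i : ℝ)) (fun i => (ym i : ℝ)) := by
      refine ⟨1/2, 1/2, by norm_num, by norm_num, by norm_num, ?_⟩
      funext i
      simp only [Pi.add_apply, Pi.smul_apply, smul_eq_mul, hyp, hym]
      split_ifs with h
      · have h1 : 1 ≤ y i := by omega
        push_cast [Nat.cast_sub h1]
        ring
      · ring
    rw [mem_extremePoints] at hx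
    obtain ⟨_, hext⟩ := hx
    have hsub : {x : Fin m → ℝ | ∃ y : Fin m → ℕ,
        (∀ i, y i ≤ n) ∧ (∀ i j, i ≠ j → y i ≠ 0 → y j ≠ 0 → y i ≠ y j) ∧
        x = fun i => (y i : ℝ)} ⊆ partialPermutohedron m n := by
      rw [partialPermutohedron]; exact subset_convexHull ℝ _
    have heq := (hext _ (hsub hypV) _ (hsub hymV) hseg).1
    -- but yp differs from y at the index achieving value v
    obtain ⟨_, i0, hi0⟩ := (hmemT v).1 hvT
    have : (yp i0 : ℝ) = (y i0 : ℝ) := congrFun heq i0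
    have h1 : yp i0 = y i0 := by exact_mod_cast this
    simp only [hyp, hi0, if_pos (And.intro hav le_rfl)] at h1
    omega
end B
section C

/-- The vertex vector associated to `(k, f)`. -/
noncomputable def auxG (m n : ℕ) (p : (k : Fin (min m n + 1)) × (Fin (k : ℕ) ↪ Fin m)) :
    Fin m → ℝ :=
  fun i => if h : ∃ j, p.2 j = i then (n : ℝ) - (Classical.choose h : Fin (p.1 : ℕ)).val else 0

lemma auxG_apply (m n : ℕ) (p : (k : Fin (min m n + 1)) × (Fin (k : ℕ) ↪ Fin m))
    (j : Fin (p.1 : ℕ)) : auxG m n p (p.2 j) = (n : ℝ) - j.val := by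
  have h : ∃ j', p.2 j' = p.2 j := ⟨j, rfl⟩
  have hc : Classical.choose h = j := p.2.injective (Classical.choose_spec h)
  simp only [auxG, dif_pos h, hc]

lemma auxG_not (m n : ℕ) (p : (k : Fin (min m n + 1)) × (Fin (k : ℕ) ↪ Fin m))
    (i : Fin m) (h : ∀ j, p.2 j ≠ i) : auxG m n p i = 0 := by
  simp only [auxG, dif_neg (not_exists.2 h)]

lemma auxG_ne_zero (m n : ℕ) (hn : 1 ≤ n)
    (p : (k : Fin (min m n + 1)) × (Fin (k : ℕ) ↪ Fin m)) (i : Fin m) :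
    auxG m n p i ≠ 0 ↔ ∃ j, p.2 j = i := by
  constructor
  · intro h
    by_contra hc
    push_neg at hc
    exact h (auxG_not m n p i hc)
  · rintro ⟨j, rfl⟩
    rw [auxG_apply]
    have h1 : j.val < (p.1 : ℕ) := j.isLt
    have h2 : (p.1 : ℕ) ≤ min m n := Nat.lt_succ_iff.1 p.1.isLt
    have h3 : j.val < n := by
      have := min_le_right m n; omega
    intro hzero
    have : (j.val : ℝ) = (n : ℝ) := by linarith
    have : j.val = n := by exact_mod_cast this
    omega

lemma auxG_inj (m n : ℕ) (hn : 1 ≤ n) : Function.Injective (auxG m n) := by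
  rintro ⟨k, f⟩ ⟨k', f'⟩ heq
  have hmem : ∀ i : Fin m, (∃ j, f j = i) ↔ (∃ j, f' j = i) := by
    intro i
    rw [← auxG_ne_zero m n hn ⟨k, f⟩ i, ← auxG_ne_zero m n hn ⟨k', f'⟩ i, heq]
  have hkk' : k = k' := by
    have hA : (Finset.univ.map f) = (Finset.univ.map f') := by
      ext i
      simp only [Finset.mem_map, Finset.mem_univ, true_and]
      exact hmem i
    have := congrArg Finset.card hA
    simp only [Finset.card_map, Finset.card_univ, Fintype.card_fin] at this
    exact Fin.ext this
  subst hkk'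
  have hff' : f = f' := by
    ext j
    obtain ⟨j', hj'⟩ := (hmem (f j)).1 ⟨j, rfl⟩
    have h1 : auxG m n ⟨k, f'⟩ (f j) = (n : ℝ) - j'.val := by
      rw [← hj']; exact auxG_apply m n ⟨k, f'⟩ j'
    have h2 : auxG m n ⟨k, f⟩ (f j) = (n : ℝ) - j.val := auxG_apply m n ⟨k, f⟩ j
    rw [heq, h1] at h2
    have : (j'.val : ℝ) = (j.val : ℝ) := by linarith
    have hv : j'.val = j.val := by exact_mod_cast this
    rw [← hj', Fin.ext hv]
  rw [hff']

lemma auxG_range (m n : ℕ) :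
    Set.range (auxG m n) =
      {x : Fin m → ℝ | ∃ (k : ℕ) (_ : k ≤ min m n) (f : Fin k ↪ Fin m),
        (∀ j : Fin k, x (f j) = (n : ℝ) - (j : ℕ)) ∧
        ∀ i : Fin m, (∀ j, f j ≠ i) → x i = 0} := by
  ext x
  constructor
  · rintro ⟨⟨k, f⟩, rfl⟩
    exact ⟨(k : ℕ), Nat.lt_succ_iff.1 k.isLt, f,
      fun j => auxG_apply m n ⟨k, f⟩ j, fun i hi => auxG_not m n ⟨k, f⟩ i hi⟩
  · rintro ⟨k, hk, f, hf, hz⟩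
    refine ⟨⟨⟨k, Nat.lt_succ_iff.2 hk⟩, f⟩, ?_⟩
    funext i
    by_cases h : ∃ j, f j = i
    · obtain ⟨j, rfl⟩ := h
      rw [auxG_apply m n ⟨⟨k, Nat.lt_succ_iff.2 hk⟩, f⟩ j, hf j]
    · push_neg at h
      rw [auxG_not m n _ i h, hz i h]

lemma aux_card (m n : ℕ) (hn : 1 ≤ n) :
    Nat.card ({x : Fin m → ℝ | ∃ (k : ℕ) (_ : k ≤ min m n) (f : Fin k ↪ Fin m),
        (∀ j : Fin k, x (f j) = (n : ℝ) - (j : ℕ)) ∧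
        ∀ i : Fin m, (∀ j, f j ≠ i) → x i = 0} : Set (Fin m → ℝ)) =
      ∑ i ∈ Finset.range (min m n + 1), m.factorial / (m - i).factorial := by
  rw [← auxG_range m n]
  rw [Nat.card_range_of_injective (auxG_inj m n hn)]
  rw [Nat.card_eq_fintype_card]
  rw [Fintype.card_sigma]
  have h1 : ∀ k : Fin (min m n + 1),
      Fintype.card (Fin (k : ℕ) ↪ Fin m) = m.factorial / (m - (k : ℕ)).factorial := by
    intro k
    rw [Fintype.card_embedding_eq]
    simp only [Fintype.card_fin]
    have hkm : (k : ℕ) ≤ m := by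
      have h2 : (k : ℕ) ≤ min m n := Nat.lt_succ_iff.1 k.isLt
      have := min_le_left m n; omega
    rw [Nat.descFactorial_eq_div hkm]
  calc ∑ k : Fin (min m n + 1), Fintype.card (Fin (k : ℕ) ↪ Fin m)
      = ∑ k : Fin (min m n + 1), m.factorial / (m - (k : ℕ)).factorial :=
        Finset.sum_congr rfl (fun k _ => h1 k)
    _ = ∑ i ∈ Finset.range (min m n + 1), m.factorial / (m - i).factorial :=
        Fin.sum_univ_eq_sum_range (fun i => m.factorial / (m - i).factorial) (min m n + 1)

end C

/-- the vertices (extreme points) of `P(m,n)` are exactly the vectors with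
zeros in some `m-k` positions and entries `n, n-1, …, n-k+1` (in some order) in the
remaining `k` positions, for `0 ≤ k ≤ min(m,n)`; in particular there are exactly
`∑_{i=0}^{min(m,n)} m!/(m-i)!` of them. -/
theorem vertices_partialPermutohedron (m n : ℕ) (hm : 1 ≤ m) (hn : 1 ≤ n) :
    Set.extremePoints ℝ (partialPermutohedron m n) =
      {x : Fin m → ℝ | ∃ (k : ℕ) (_ : k ≤ min m n) (f : Fin k ↪ Fin m),
        (∀ j : Fin k, x (f j) = (n : ℝ) - (j : ℕ)) ∧
        ∀ i : Fin m, (∀ j, f j ≠ i) → x i = 0} ∧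
    Nat.card (Set.extremePoints ℝ (partialPermutohedron m n)) =
      ∑ i ∈ Finset.range (min m n + 1), m.factorial / (m - i).factorial := by
  have hset : Set.extremePoints ℝ (partialPermutohedron m n) =
      {x : Fin m → ℝ | ∃ (k : ℕ) (_ : k ≤ min m n) (f : Fin k ↪ Fin m),
        (∀ j : Fin k, x (f j) = (n : ℝ) - (j : ℕ)) ∧
        ∀ i : Fin m, (∀ j, f j ≠ i) → x i = 0} := by
    ext x
    constructor
    · intro hx
      exact aux_extreme_sub m n hn x hx
    · rintro ⟨k, hk, f, hf, hz⟩
      exact aux_mem_extreme m n k hk f x hf hz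
  refine ⟨hset, ?_⟩
  rw [hset]
  exact aux_card m n hn
end

section
/- For positive integers m and n with n ≥ m-1, the partial permutohedron P(m,n) equals the Minkowski sum (n-m+1)·sum_{i=1}^m conv{0, e_i} + sum_{1≤i<j≤m} conv{0, e_i, e_j}, where e_i are the standard unit vectors in R^m. -/
open Pointwise

namespace PPM

open Finset

variable {m n : ℕ}

def Agen (m n : ℕ) : Set (Fin m → ℝ) :=
  {x : Fin m → ℝ | ∃ y : Fin m → ℕ,
    (∀ i, y i ≤ n) ∧ (∀ i j, i ≠ j → y i ≠ 0 → y j ≠ 0 → y i ≠ y j) ∧ x = fun i => (y i : ℝ)}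

def pairs (m : ℕ) : Finset (Fin m × Fin m) := Finset.univ.filter (fun p => p.1 < p.2)

noncomputable def Q0 (m : ℕ) : Set (Fin m → ℝ) :=
  ∑ i : Fin m, ({0, Pi.single i 1} : Set (Fin m → ℝ))

noncomputable def R0 (m : ℕ) : Set (Fin m → ℝ) :=
  ∑ p ∈ pairs m, ({0, Pi.single p.1 1, Pi.single p.2 1} : Set (Fin m → ℝ))

def fb (n s : ℕ) : ℕ := ∑ k ∈ Finset.range s, (n - k)

def Good (m n : ℕ) (z : Fin m → ℕ) : Prop := ∀ S : Finset (Fin m), ∑ i ∈ S, z i ≤ fb n S.card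

theorem fb_id (s ℓ : ℕ) (h1 : 1 ≤ ℓ) (hls : ℓ ≤ s) (hsm : s + ℓ ≤ m) (hn : m ≤ n + 1) :
    fb n (s + ℓ) + fb n (s - ℓ) + ℓ * ℓ = 2 * fb n s := by
  have key : ∀ a : ℕ, a ≤ m → (fb n a : ℤ) = ∑ k ∈ Finset.range a, ((n : ℤ) - k) := by
    intro a ha
    rw [fb, Nat.cast_sum]
    refine Finset.sum_congr rfl fun k hk => ?_
    rw [Finset.mem_range] at hk
    have : k ≤ n := by omega
    push_cast [Nat.cast_sub this]
    ring
  have hz : (fb n (s + ℓ) : ℤ) + fb n (s - ℓ) + ℓ * ℓ = 2 * fb n s := by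
    rw [key (s+ℓ) (by omega), key (s-ℓ) (by omega), key s (by omega)]
    have e1 : ∑ k ∈ Finset.range (s + ℓ), ((n : ℤ) - k) =
        (∑ k ∈ Finset.range s, ((n : ℤ) - k)) + ∑ k ∈ Finset.Ico s (s + ℓ), ((n : ℤ) - k) := by
      rw [Finset.sum_range_add_sum_Ico _ (by omega)]
    have e2 : ∑ k ∈ Finset.range s, ((n : ℤ) - k) =
        (∑ k ∈ Finset.range (s - ℓ), ((n : ℤ) - k)) + ∑ k ∈ Finset.Ico (s - ℓ) s, ((n : ℤ) - k) := by
      rw [Finset.sum_range_add_sum_Ico _ (by omega)]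
    have e3 : ∑ k ∈ Finset.Ico s (s + ℓ), ((n : ℤ) - k) =
        ∑ t ∈ Finset.range ℓ, ((n : ℤ) - (s + t)) := by
      rw [Finset.sum_Ico_eq_sum_range]
      simp only [Nat.add_sub_cancel_left]
      exact Finset.sum_congr rfl fun t _ => by push_cast; ring
    have e4 : ∑ k ∈ Finset.Ico (s - ℓ) s, ((n : ℤ) - k) =
        ∑ t ∈ Finset.range ℓ, ((n : ℤ) - ((s : ℤ) - ℓ + t)) := by
      rw [Finset.sum_Ico_eq_sum_range]
      have hss : s - (s - ℓ) = ℓ := by omega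
      rw [hss]
      exact Finset.sum_congr rfl fun t _ => by push_cast [Nat.cast_sub hls]; ring
    have e5 : ∑ t ∈ Finset.range ℓ, ((n : ℤ) - (s + t)) =
        (∑ t ∈ Finset.range ℓ, ((n : ℤ) - ((s : ℤ) - ℓ + t))) - ℓ * ℓ := by
      have hc : ∀ t ∈ Finset.range ℓ, ((n : ℤ) - (s + t)) = ((n : ℤ) - ((s : ℤ) - ℓ + t)) - ℓ :=
        fun t _ => by ring
      rw [Finset.sum_congr rfl hc, Finset.sum_sub_distrib, Finset.sum_const, Finset.card_range]
      push_cast; ring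
    linarith
  exact_mod_cast hz

theorem fb_split (hn : m ≤ n + 1) {s : ℕ} (hs : s ≤ m) :
    (n + 1 - m) * s + ∑ k ∈ Finset.range s, (m - 1 - k) = fb n s := by
  rw [fb]
  have h : ∀ k ∈ Finset.range s, (n + 1 - m) + (m - 1 - k) = n - k := by
    intro k hk; rw [Finset.mem_range] at hk; omega
  calc (n+1-m)*s + ∑ k ∈ Finset.range s, (m-1-k)
      = ∑ k ∈ Finset.range s, ((n+1-m) + (m-1-k)) := by
        rw [Finset.sum_add_distrib, Finset.sum_const, Finset.card_range, smul_eq_mul, mul_comm]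
    _ = _ := Finset.sum_congr rfl h

theorem good_le {z : Fin m → ℕ} (hg : Good m n z) (i : Fin m) : z i ≤ n := by
  have := hg {i}; simpa [fb] using this

theorem good_strict {z : Fin m → ℕ} (hg : Good m n z) (hn : m ≤ n + 1) {i j : Fin m}
    (hij : i ≠ j) (hzz : z i = z j) {S : Finset (Fin m)} (hi : i ∈ S) (hj : j ∉ S) :
    ∑ k ∈ S, z k + 1 ≤ fb n S.card := by
  by_contra hcon
  push_neg at hcon
  have htight : ∑ k ∈ S, z k = fb n S.card := le_antisymm (hg S) (by omega)
  set S' : Finset (Fin m) := insert j (S.erase i) with hS'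
  have hjS' : j ∈ S' := Finset.mem_insert_self _ _
  have hiS' : i ∉ S' := by
    simp [hS', Finset.mem_insert, Finset.mem_erase, hij]
  have hcard' : S'.card = S.card := by
    rw [hS', Finset.card_insert_of_notMem (by simp [Finset.mem_erase, hj]), Finset.card_erase_of_mem hi]
    have : 1 ≤ S.card := Finset.card_pos.2 ⟨i, hi⟩
    omega
  have hsum' : ∑ k ∈ S', z k = ∑ k ∈ S, z k := by
    rw [hS', Finset.sum_insert (by simp [Finset.mem_erase, hj]), ← hzz, Finset.add_sum_erase _ _ hi]
  -- union and intersection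
  have hUI : ∑ k ∈ S ∪ S', z k + ∑ k ∈ S ∩ S', z k = ∑ k ∈ S, z k + ∑ k ∈ S', z k :=
    Finset.sum_union_inter
  have hcUI : (S ∪ S').card + (S ∩ S').card = S.card + S'.card :=
    Finset.card_union_add_card_inter _ _
  have hSsub : S ⊆ S ∪ S' := Finset.subset_union_left
  have hUlt : S.card < (S ∪ S').card :=
    Finset.card_lt_card ⟨hSsub, fun hsub => hj (hsub (Finset.mem_union_right _ hjS'))⟩
  set ℓ : ℕ := (S ∪ S').card - S.card with hl
  have hl1 : 1 ≤ ℓ := by omega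
  have hub : (S ∪ S').card ≤ m := le_trans (Finset.card_le_univ _) (by simp)
  have hgU := hg (S ∪ S')
  have hgI := hg (S ∩ S')
  have hsum2 : 2 * fb n S.card = ∑ k ∈ S ∪ S', z k + ∑ k ∈ S ∩ S', z k := by omega
  have hls : ℓ ≤ S.card := by omega
  have hu : (S ∪ S').card = S.card + ℓ := by omega
  have hi' : (S ∩ S').card = S.card - ℓ := by omega
  have hid := fb_id (n := n) (m := m) S.card ℓ hl1 hls (by omega) hn
  have h1 : ∑ k ∈ S ∪ S', z k ≤ fb n (S.card + ℓ) := hu ▸ hgU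
  have h2 : ∑ k ∈ S ∩ S', z k ≤ fb n (S.card - ℓ) := hi' ▸ hgI
  have hpos : 0 < ℓ * ℓ := Nat.mul_pos hl1 hl1
  omega

theorem good_step {z w : Fin m → ℕ} (hg : Good m n z) (hn : m ≤ n + 1) {i j : Fin m}
    (hij : i ≠ j) (hzz : z i = z j) (hz0 : z i ≠ 0)
    (hwi : w i = z i + 1) (hwj : w j = z j - 1) (hwo : ∀ t, t ≠ i → t ≠ j → w t = z t) :
    Good m n w ∧ (∑ t, w t * w t) = (∑ t, z t * z t) + 2 := by
  have hzj : z j ≠ 0 := hzz ▸ hz0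
  constructor
  · intro S
    by_cases hi : i ∈ S <;> by_cases hj : j ∈ S
    · -- both
      have hje : j ∈ S.erase i := Finset.mem_erase.2 ⟨hij.symm, hj⟩
      have e1 : w i + ∑ k ∈ S.erase i, w k = ∑ k ∈ S, w k := Finset.add_sum_erase _ w hi
      have e2 : w j + ∑ k ∈ (S.erase i).erase j, w k = ∑ k ∈ S.erase i, w k :=
        Finset.add_sum_erase _ w hje
      have f1 : z i + ∑ k ∈ S.erase i, z k = ∑ k ∈ S, z k := Finset.add_sum_erase _ z hi
      have f2 : z j + ∑ k ∈ (S.erase i).erase j, z k = ∑ k ∈ S.erase i, z k :=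
        Finset.add_sum_erase _ z hje
      have h3 : ∑ k ∈ (S.erase i).erase j, w k = ∑ k ∈ (S.erase i).erase j, z k :=
        Finset.sum_congr rfl fun k hk => by
          rw [Finset.mem_erase, Finset.mem_erase] at hk
          exact hwo k hk.2.1 hk.1
      have := hg S
      omega
    · -- i only
      have hst := good_strict hg hn hij hzz hi hj
      have e1 : w i + ∑ k ∈ S.erase i, w k = ∑ k ∈ S, w k := Finset.add_sum_erase _ w hi
      have f1 : z i + ∑ k ∈ S.erase i, z k = ∑ k ∈ S, z k := Finset.add_sum_erase _ z hi
      have h3 : ∑ k ∈ S.erase i, w k = ∑ k ∈ S.erase i, z k :=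
        Finset.sum_congr rfl fun k hk => by
          rw [Finset.mem_erase] at hk
          rcases eq_or_ne k j with rfl | hkj
          · exact absurd hk.2 hj
          · exact hwo k hk.1 hkj
      omega
    · -- j only
      refine le_trans (Finset.sum_le_sum fun k hk => ?_) (hg S)
      rcases eq_or_ne k i with rfl | hki
      · exact absurd hk hi
      rcases eq_or_ne k j with rfl | hkj
      · rw [hwj]; omega
      · rw [hwo k hki hkj]
    · refine le_trans (le_of_eq (Finset.sum_congr rfl fun k hk => ?_)) (hg S)
      rcases eq_or_ne k i with rfl | hki
      · exact absurd hk hi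
      rcases eq_or_ne k j with rfl | hkj
      · exact absurd hk hj
      · exact hwo k hki hkj
  · have hiu : (i : Fin m) ∈ (Finset.univ : Finset (Fin m)) := Finset.mem_univ i
    have hju : j ∈ (Finset.univ : Finset (Fin m)).erase i :=
      Finset.mem_erase.2 ⟨hij.symm, Finset.mem_univ j⟩
    have e1 : w i * w i + ∑ k ∈ Finset.univ.erase i, w k * w k = ∑ t, w t * w t :=
      Finset.add_sum_erase _ (fun t => w t * w t) hiu
    have e2 : w j * w j + ∑ k ∈ (Finset.univ.erase i).erase j, w k * w k
        = ∑ k ∈ Finset.univ.erase i, w k * w k :=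
      Finset.add_sum_erase _ (fun t => w t * w t) hju
    have f1 : z i * z i + ∑ k ∈ Finset.univ.erase i, z k * z k = ∑ t, z t * z t :=
      Finset.add_sum_erase _ (fun t => z t * z t) hiu
    have f2 : z j * z j + ∑ k ∈ (Finset.univ.erase i).erase j, z k * z k
        = ∑ k ∈ Finset.univ.erase i, z k * z k :=
      Finset.add_sum_erase _ (fun t => z t * z t) hju
    have h3 : ∑ k ∈ (Finset.univ.erase i).erase j, w k * w k
        = ∑ k ∈ (Finset.univ.erase i).erase j, z k * z k :=
      Finset.sum_congr rfl fun k hk => by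
        rw [Finset.mem_erase, Finset.mem_erase] at hk
        rw [hwo k hk.2.1 hk.1]
    have hsq : w i * w i + w j * w j = z i * z i + z j * z j + 2 := by
      rw [hwi, hwj, ← hzz]
      obtain ⟨b, hb⟩ : ∃ b, z i = b + 1 := ⟨z i - 1, by omega⟩
      rw [hb]
      simp only [Nat.add_sub_cancel]
      ring
    omega

theorem lemG (hn : m ≤ n + 1) (z : Fin m → ℕ) (hg : Good m n z) :
    (fun i => (z i : ℝ)) ∈ convexHull ℝ (Agen m n) := by
  suffices H : ∀ k (z : Fin m → ℕ), Good m n z → m * n * n < (∑ t, z t * z t) + k →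
      (fun i => (z i : ℝ)) ∈ convexHull ℝ (Agen m n) by
    exact H (m * n * n + 1) z hg (by omega)
  intro k
  induction k with
  | zero =>
    intro z hg hlt
    exfalso
    have hb : ∀ t ∈ Finset.univ, z t * z t ≤ n * n :=
      fun t _ => Nat.mul_le_mul (good_le hg t) (good_le hg t)
    have := Finset.sum_le_card_nsmul Finset.univ _ _ hb
    simp only [Finset.card_univ, Fintype.card_fin, smul_eq_mul] at this
    have : (∑ t, z t * z t) ≤ m * n * n := by rw [Nat.mul_assoc]; exact this
    omega
  | succ k ih =>
    intro z hg hlt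
    by_cases hd : ∀ i j, i ≠ j → z i ≠ 0 → z j ≠ 0 → z i ≠ z j
    · exact subset_convexHull ℝ _ ⟨z, fun i => good_le hg i, hd, rfl⟩
    · push_neg at hd
      obtain ⟨i, j, hij, hzi, hzj, hzz⟩ := hd
      set w1 : Fin m → ℕ := fun t => if t = i then z t + 1 else if t = j then z t - 1 else z t with hw1
      set w2 : Fin m → ℕ := fun t => if t = j then z t + 1 else if t = i then z t - 1 else z t with hw2
      obtain ⟨hg1, hs1⟩ := good_step (w := w1) hg hn hij hzz hzi (by simp [hw1])
        (by simp [hw1, hij.symm]) (fun t h1 h2 => by simp [hw1, h1, h2])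
      obtain ⟨hg2, hs2⟩ := good_step (w := w2) hg hn hij.symm hzz.symm hzj (by simp [hw2])
        (by simp [hw2, hij]) (fun t h1 h2 => by simp [hw2, h1, h2])
      have m1 := ih w1 hg1 (by omega)
      have m2 := ih w2 hg2 (by omega)
      have hcvx := convex_convexHull ℝ (Agen m n)
      have hmem := hcvx m1 m2 (by norm_num : (0:ℝ) ≤ 1/2) (by norm_num : (0:ℝ) ≤ 1/2)
        (by norm_num : (1:ℝ)/2 + 1/2 = 1)
      convert hmem using 1
      funext t
      have hzi1 : 1 ≤ z i := Nat.one_le_iff_ne_zero.2 hzi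
      have hzj1 : 1 ≤ z j := Nat.one_le_iff_ne_zero.2 hzj
      simp only [Pi.add_apply, Pi.smul_apply, smul_eq_mul, hw1, hw2]
      rcases eq_or_ne t i with rfl | hti
      · rw [if_pos rfl, if_neg hij, if_pos rfl]
        push_cast [Nat.cast_sub hzi1]
        ring
      · rcases eq_or_ne t j with rfl | htj
        · rw [if_neg hij.symm, if_pos rfl, if_pos rfl]
          push_cast [Nat.cast_sub hzj1]
          ring
        · rw [if_neg hti, if_neg htj, if_neg htj, if_neg hti]
          ring

theorem Ecount (S : Finset (Fin m)) :
    (∑ p ∈ pairs m, if p.1 ∈ S ∨ p.2 ∈ S then 1 else 0) ≤ ∑ k ∈ Finset.range S.card, (m - 1 - k) := by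
  classical
  induction S using Finset.induction_on with
  | empty => simp
  | @insert a S ha ih =>
    set T := insert a S with hT
    have key : ∀ p ∈ pairs m, (if p.1 ∈ T ∨ p.2 ∈ T then 1 else 0) ≤
        (if p.1 ∈ S ∨ p.2 ∈ S then 1 else 0) +
        ((if p.1 = a ∧ p.2 ∉ T then 1 else 0) + (if p.2 = a ∧ p.1 ∉ T then 1 else 0)) := by
      intro p hp
      have hne : p.1 ≠ p.2 := ne_of_lt (Finset.mem_filter.1 hp).2
      by_cases hS : p.1 ∈ S ∨ p.2 ∈ S
      · rw [if_pos hS]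
        split_ifs <;> omega
      · by_cases hL : p.1 ∈ T ∨ p.2 ∈ T
        · have hind : 1 ≤ (if p.1 = a ∧ p.2 ∉ T then 1 else 0) + (if p.2 = a ∧ p.1 ∉ T then 1 else 0) := by
            push_neg at hS
            rcases hL with h | h
            · rcases Finset.mem_insert.1 h with h1 | h'
              · have h2 : p.2 ∉ T := by
                  simp only [hT, Finset.mem_insert]
                  push_neg
                  exact ⟨fun e => hne (h1.trans e.symm), hS.2⟩
                have e1 : (if p.1 = a ∧ p.2 ∉ T then 1 else 0) = 1 := if_pos ⟨h1, h2⟩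
                omega
              · exact absurd h' hS.1
            · rcases Finset.mem_insert.1 h with h1 | h'
              · have h2 : p.1 ∉ T := by
                  simp only [hT, Finset.mem_insert]
                  push_neg
                  exact ⟨fun e => hne (e.trans h1.symm), hS.1⟩
                have e1 : (if p.2 = a ∧ p.1 ∉ T then 1 else 0) = 1 := if_pos ⟨h1, h2⟩
                omega
              · exact absurd h' hS.2
          rw [if_pos hL, if_neg hS]
          omega
        · rw [if_neg hL, if_neg hS]
          omega
    have step1 := Finset.sum_le_sum key
    rw [Finset.sum_add_distrib, Finset.sum_add_distrib] at step1
    -- compute the two correction sums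
    have hC1 : (∑ p ∈ pairs m, if p.1 = a ∧ p.2 ∉ T then 1 else 0)
        = ∑ y : Fin m, if a < y ∧ y ∉ T then 1 else 0 := by
      rw [pairs, Finset.sum_filter, Fintype.sum_prod_type]
      have : ∀ x : Fin m, (∑ y : Fin m, if x < y then (if x = a ∧ y ∉ T then 1 else 0) else 0)
          = if x = a then (∑ y : Fin m, if a < y ∧ y ∉ T then 1 else 0) else 0 := by
        intro x
        rcases eq_or_ne x a with rfl | hx
        · rw [if_pos rfl]
          refine Finset.sum_congr rfl fun y _ => ?_
          split_ifs <;> simp_all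
        · rw [if_neg hx]
          refine Finset.sum_eq_zero fun y _ => ?_
          split_ifs <;> simp_all
      rw [Finset.sum_congr rfl fun x _ => this x, Finset.sum_ite_eq' Finset.univ a, if_pos (Finset.mem_univ a)]
    have hC2 : (∑ p ∈ pairs m, if p.2 = a ∧ p.1 ∉ T then 1 else 0)
        = ∑ y : Fin m, if y < a ∧ y ∉ T then 1 else 0 := by
      rw [pairs, Finset.sum_filter, Fintype.sum_prod_type]
      have : ∀ x : Fin m, (∑ y : Fin m, if x < y then (if y = a ∧ x ∉ T then 1 else 0) else 0)
          = if x < a ∧ x ∉ T then 1 else 0 := by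
        intro x
        by_cases hx : x < a ∧ x ∉ T
        · rw [if_pos hx]
          have hpt : ∀ y : Fin m, (if x < y then (if y = a ∧ x ∉ T then 1 else 0) else 0)
              = if y = a then 1 else 0 := by
            intro y
            rcases eq_or_ne y a with rfl | hy
            · rw [if_pos hx.1, if_pos ⟨rfl, hx.2⟩, if_pos rfl]
            · rw [if_neg hy]
              split_ifs with h1 h2
              · exact absurd h2.1 hy
              · rfl
              · rfl
          rw [Finset.sum_congr rfl fun y _ => hpt y, Finset.sum_ite_eq' Finset.univ a, if_pos (Finset.mem_univ a)]
        · rw [if_neg hx]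
          refine Finset.sum_eq_zero fun y _ => ?_
          split_ifs with h1 h2
          · exact absurd ⟨h2.1 ▸ h1, h2.2⟩ hx
          · rfl
          · rfl
      rw [Finset.sum_congr rfl fun x _ => this x]
    have hmerge : (∑ y : Fin m, if a < y ∧ y ∉ T then 1 else 0)
        + (∑ y : Fin m, if y < a ∧ y ∉ T then 1 else 0)
        = ∑ y : Fin m, if y ∉ T then 1 else 0 := by
      rw [← Finset.sum_add_distrib]
      refine Finset.sum_congr rfl fun y _ => ?_
      rcases lt_trichotomy a y with h | rfl | h
      · simp [h, asymm h]
      · simp [lt_irrefl, hT, Finset.mem_insert_self]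
      · simp [h, asymm h]
    have hcard : (∑ y : Fin m, if y ∉ T then 1 else 0) = m - T.card := by
      rw [Finset.sum_boole]
      norm_cast
      rw [← Finset.sdiff_eq_filter]
      rw [Finset.card_sdiff_of_subset (Finset.subset_univ T)]
      simp
    have hTcard : T.card = S.card + 1 := Finset.card_insert_of_notMem ha
    calc (∑ p ∈ pairs m, if p.1 ∈ T ∨ p.2 ∈ T then 1 else 0)
        ≤ (∑ p ∈ pairs m, if p.1 ∈ S ∨ p.2 ∈ S then 1 else 0) + (m - T.card) := by
          rw [← hcard, ← hmerge, ← hC1, ← hC2]; exact step1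
      _ ≤ (∑ k ∈ Finset.range S.card, (m - 1 - k)) + (m - 1 - S.card) := by
          have : m - T.card = m - 1 - S.card := by omega
          omega
      _ = ∑ k ∈ Finset.range T.card, (m - 1 - k) := by
          rw [hTcard, Finset.sum_range_succ]

theorem rho_exists (r : Fin m → ℕ)
    (hd : ∀ i j, i ≠ j → r i ≠ 0 → r j ≠ 0 → r i ≠ r j) (hb : ∀ i, r i + 1 ≤ m) :
    ∃ ρ : Fin m → Fin m, Function.Bijective ρ ∧ ∀ i, (ρ i : ℕ) + r i < m := by
  classical
  let g : Fin m → ℕ := fun i =>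
    (Finset.univ.filter fun j => r i < r j ∨ (r i = r j ∧ (i : ℕ) < (j : ℕ))).card
  have hg : ∀ i, g i = (Finset.univ.filter fun j => r i < r j ∨ (r i = r j ∧ (i : ℕ) < (j : ℕ))).card :=
    fun i => rfl
  have hlt : ∀ i, g i + r i < m := by
    intro i
    rcases eq_or_ne (r i) 0 with h0 | h0
    · have hsub : (Finset.univ.filter fun j => r i < r j ∨ (r i = r j ∧ (i : ℕ) < (j : ℕ)))
          ⊆ Finset.univ.erase i := by
        intro j hj
        rw [Finset.mem_filter] at hj
        refine Finset.mem_erase.2 ⟨?_, Finset.mem_univ j⟩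
        rintro rfl
        rcases hj.2 with h | h
        · exact absurd h (lt_irrefl _)
        · exact absurd h.2 (lt_irrefl _)
      have hgi : g i ≤ m - 1 := by
        rw [hg i]
        have := Finset.card_le_card hsub
        rwa [Finset.card_erase_of_mem (Finset.mem_univ i), Finset.card_univ, Fintype.card_fin] at this
      have hm : 1 ≤ m := by have := hb i; omega
      omega
    · have hcard : g i ≤ m - 1 - r i := by
        rw [hg]
        have heq : (Finset.univ.filter fun j => r i < r j ∨ (r i = r j ∧ (i : ℕ) < (j : ℕ)))
            = Finset.univ.filter fun j => r i < r j := by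
          refine Finset.filter_congr fun j _ => ?_
          constructor
          · rintro (h | h)
            · exact h
            · exfalso
              have hji : j ≠ i := by rintro rfl; exact absurd h.2 (lt_irrefl _)
              exact hd i j (Ne.symm hji) h0 (h.1 ▸ h0) h.1
          · exact Or.inl
        rw [heq]
        have hmap : ∀ j ∈ (Finset.univ.filter fun j => r i < r j), r j ∈ Finset.Ioc (r i) (m - 1) := by
          intro j hj
          rw [Finset.mem_filter] at hj
          have := hb j
          exact Finset.mem_Ioc.2 ⟨hj.2, by omega⟩
        have hinj : ∀ j1 ∈ (Finset.univ.filter fun j => r i < r j),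
            ∀ j2 ∈ (Finset.univ.filter fun j => r i < r j), r j1 = r j2 → j1 = j2 := by
          intro j1 h1 j2 h2 he
          rw [Finset.mem_filter] at h1 h2
          by_contra hne
          exact hd j1 j2 hne (by omega) (by omega) he
        have := Finset.card_le_card_of_injOn _ hmap hinj
        rw [Nat.card_Ioc] at this
        exact this
      have := hb i
      omega
  have hkey : ∀ i j : Fin m, (r i < r j ∨ (r i = r j ∧ (i : ℕ) < (j : ℕ))) → g j < g i := by
    intro i j hij
    have hjnot : j ∉ (Finset.univ.filter fun k => r j < r k ∨ (r j = r k ∧ (j : ℕ) < (k : ℕ))) := by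
      rw [Finset.mem_filter]
      push_neg
      intro _
      omega
    have hsub : insert j (Finset.univ.filter fun k => r j < r k ∨ (r j = r k ∧ (j : ℕ) < (k : ℕ)))
        ⊆ Finset.univ.filter fun k => r i < r k ∨ (r i = r k ∧ (i : ℕ) < (k : ℕ)) := by
      intro k hk
      rcases Finset.mem_insert.1 hk with rfl | hk
      · exact Finset.mem_filter.2 ⟨Finset.mem_univ _, hij⟩
      · rw [Finset.mem_filter] at hk ⊢
        refine ⟨Finset.mem_univ _, ?_⟩
        have h2 := hk.2
        omega
    have hc := Finset.card_le_card hsub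
    rw [Finset.card_insert_of_notMem hjnot] at hc
    rw [hg i, hg j]
    omega
  have hginj : Function.Injective g := by
    intro i j hgij
    by_contra hne
    have hvne : (i : ℕ) ≠ (j : ℕ) := fun h => hne (Fin.ext h)
    have htri : (r i < r j ∨ (r i = r j ∧ (i : ℕ) < (j : ℕ)))
        ∨ (r j < r i ∨ (r j = r i ∧ (j : ℕ) < (i : ℕ))) := by omega
    rcases htri with h | h
    · exact absurd hgij.symm (Nat.ne_of_lt (hkey i j h))
    · exact absurd hgij (Nat.ne_of_lt (hkey j i h))
  refine ⟨fun i => ⟨g i, by have := hlt i; omega⟩, ?_, fun i => hlt i⟩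
  rw [← Finite.injective_iff_bijective]
  intro i j hij
  exact hginj (by simpa using congrArg Fin.val hij)

theorem count_Ioc (ρ : Fin m → Fin m) (hρ : Function.Bijective ρ) (a b : ℕ) (hbm : b < m) :
    (Finset.univ.filter fun j => a < (ρ j : ℕ) ∧ (ρ j : ℕ) ≤ b).card = b - a := by
  classical
  have h1 : (Finset.univ.filter fun j => a < (ρ j : ℕ) ∧ (ρ j : ℕ) ≤ b).card
      = (Finset.univ.filter fun t : Fin m => a < (t : ℕ) ∧ (t : ℕ) ≤ b).card := by
    refine Finset.card_bij (fun j _ => ρ j) ?_ ?_ ?_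
    · intro j hj
      rw [Finset.mem_filter] at hj ⊢
      exact ⟨Finset.mem_univ _, hj.2⟩
    · intro j1 _ j2 _ he
      exact hρ.1 he
    · intro t ht
      obtain ⟨j, rfl⟩ := hρ.2 t
      rw [Finset.mem_filter] at ht
      exact ⟨j, Finset.mem_filter.2 ⟨Finset.mem_univ _, ht.2⟩, rfl⟩
  rw [h1]
  have h2 : (Finset.univ.filter fun t : Fin m => a < (t : ℕ) ∧ (t : ℕ) ≤ b).card
      = (Finset.Ioc a b).card := by
    refine Finset.card_bij (fun t _ => (t : ℕ)) ?_ ?_ ?_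
    · intro t ht
      rw [Finset.mem_filter] at ht
      exact Finset.mem_Ioc.2 ht.2
    · intro t1 _ t2 _ he
      exact Fin.ext he
    · intro x hx
      rw [Finset.mem_Ioc] at hx
      exact ⟨⟨x, by omega⟩, Finset.mem_filter.2 ⟨Finset.mem_univ _, by simpa using hx⟩, rfl⟩
  rw [h2, Nat.card_Ioc]

theorem q_mem_Q (u : Fin m → ℝ) (h0 : ∀ i, 0 ≤ u i) (h1 : ∀ i, u i ≤ 1) :
    u ∈ ∑ i : Fin m, convexHull ℝ {(0 : Fin m → ℝ), Pi.single i 1} := by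
  have hu : u = ∑ i : Fin m, u i • (Pi.single i 1 : Fin m → ℝ) := by
    funext k
    rw [Finset.sum_apply]
    simp only [Pi.smul_apply, Pi.single_apply, smul_eq_mul, mul_ite, mul_one, mul_zero]
    rw [Finset.sum_ite_eq Finset.univ k, if_pos (Finset.mem_univ k)]
  rw [hu]
  refine Set.finset_sum_mem_finset_sum Finset.univ _ _ fun i _ => ?_
  rw [convexHull_pair, segment_eq_image]
  exact ⟨u i, ⟨h0 i, h1 i⟩, by simp⟩

theorem r_mem_R0 (r : Fin m → ℕ)
    (hd : ∀ i j, i ≠ j → r i ≠ 0 → r j ≠ 0 → r i ≠ r j) (hb : ∀ i, r i + 1 ≤ m) :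
    (fun k => (r k : ℝ)) ∈ ∑ p ∈ pairs m, convexHull ℝ {(0 : Fin m → ℝ), Pi.single p.1 1, Pi.single p.2 1} := by
  classical
  obtain ⟨ρ, hbij, hρ⟩ := rho_exists r hd hb
  let w : Fin m → Fin m → (Fin m → ℝ) := fun i j =>
    if (ρ i : ℕ) < (ρ j : ℕ) ∧ (ρ j : ℕ) ≤ (ρ i : ℕ) + r i then Pi.single i 1 else 0
  have hw : ∀ i j, w i j
      = if (ρ i : ℕ) < (ρ j : ℕ) ∧ (ρ j : ℕ) ≤ (ρ i : ℕ) + r i then Pi.single i 1 else 0 :=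
    fun _ _ => rfl
  let v : Fin m × Fin m → (Fin m → ℝ) := fun p => w p.1 p.2 + w p.2 p.1
  have hv : ∀ p : Fin m × Fin m, v p = w p.1 p.2 + w p.2 p.1 := fun _ => rfl
  have hdiag : ∀ p : Fin m × Fin m, p.1 = p.2 → w p.1 p.2 = 0 := by
    intro p hp
    rw [hw, hp, if_neg]
    push_neg
    intro h
    omega
  have hsum : ∑ p ∈ pairs m, v p = fun k => (r k : ℝ) := by
    have hsplit : ∑ p ∈ pairs m, v p
        = (∑ p ∈ pairs m, w p.1 p.2) + ∑ p ∈ pairs m, w p.2 p.1 := by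
      rw [← Finset.sum_add_distrib]
    have hswap : ∑ p ∈ pairs m, w p.2 p.1
        = ∑ p ∈ Finset.univ.filter (fun p : Fin m × Fin m => p.2 < p.1), w p.1 p.2 := by
      refine Finset.sum_nbij' (fun p => (p.2, p.1)) (fun p => (p.2, p.1)) ?_ ?_ ?_ ?_ ?_ <;>
        simp [pairs]
    have htotal : (∑ p ∈ pairs m, w p.1 p.2)
        + ∑ p ∈ Finset.univ.filter (fun p : Fin m × Fin m => p.2 < p.1), w p.1 p.2
        = ∑ p : Fin m × Fin m, w p.1 p.2 := by
      rw [pairs, ← Finset.sum_filter_add_sum_filter_not Finset.univ (fun p : Fin m × Fin m => p.1 < p.2)]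
      congr 1
      refine Finset.sum_subset ?_ ?_
      · intro p hp
        rw [Finset.mem_filter] at hp ⊢
        exact ⟨hp.1, not_lt.2 (le_of_lt hp.2)⟩
      · intro p hp1 hp2
        rw [Finset.mem_filter] at hp1
        have h21 : ¬ p.2 < p.1 := fun h => hp2 (Finset.mem_filter.2 ⟨Finset.mem_univ _, h⟩)
        exact hdiag p (le_antisymm (not_lt.1 h21) (not_lt.1 hp1.2))
    have hinner : ∀ i : Fin m, (∑ j : Fin m, w i j) = (r i : ℝ) • (Pi.single i 1 : Fin m → ℝ) := by
      intro i
      calc (∑ j : Fin m, w i j)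
          = ∑ j : Fin m, if (ρ i : ℕ) < (ρ j : ℕ) ∧ (ρ j : ℕ) ≤ (ρ i : ℕ) + r i
              then (Pi.single i 1 : Fin m → ℝ) else 0 :=
            Finset.sum_congr rfl fun j _ => hw i j
        _ = ∑ j ∈ Finset.univ.filter (fun j => (ρ i : ℕ) < (ρ j : ℕ) ∧ (ρ j : ℕ) ≤ (ρ i : ℕ) + r i),
              (Pi.single i 1 : Fin m → ℝ) := (Finset.sum_filter _ _).symm
        _ = (r i : ℝ) • (Pi.single i 1 : Fin m → ℝ) := by
            rw [Finset.sum_const, count_Ioc ρ hbij ((ρ i : ℕ)) ((ρ i : ℕ) + r i) (hρ i),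
              Nat.add_sub_cancel_left, ← Nat.cast_smul_eq_nsmul ℝ]
    calc ∑ p ∈ pairs m, v p = ∑ p : Fin m × Fin m, w p.1 p.2 := by
          rw [hsplit, hswap, htotal]
      _ = ∑ i : Fin m, ∑ j : Fin m, w i j := by rw [Fintype.sum_prod_type]
      _ = ∑ i : Fin m, (r i : ℝ) • (Pi.single i 1 : Fin m → ℝ) :=
            Finset.sum_congr rfl fun i _ => hinner i
      _ = fun k => (r k : ℝ) := by
          funext k
          rw [Finset.sum_apply]
          simp only [Pi.smul_apply, Pi.single_apply, smul_eq_mul, mul_ite, mul_one, mul_zero]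
          rw [Finset.sum_ite_eq Finset.univ k, if_pos (Finset.mem_univ k)]
  rw [← hsum]
  refine Set.finset_sum_mem_finset_sum (pairs m) _ _ fun p hp => ?_
  refine subset_convexHull ℝ _ ?_
  rw [hv p, hw, hw]
  split_ifs with h1 h2 h3
  · exfalso
    have a := h1.1
    have b := h2.1
    omega
  · rw [add_zero]
    exact Set.mem_insert_of_mem _ (Set.mem_insert _ _)
  · rw [zero_add]
    exact Set.mem_insert_of_mem _ (Set.mem_insert_of_mem _ rfl)
  · rw [add_zero]
    exact Set.mem_insert _ _

theorem dir1 (hm : 1 ≤ m) (hn : m ≤ n + 1) :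
    Agen m n ⊆ ((n : ℝ) - m + 1) • (∑ i : Fin m, convexHull ℝ {(0 : Fin m → ℝ), Pi.single i 1}) +
      ∑ p ∈ pairs m, convexHull ℝ {(0 : Fin m → ℝ), Pi.single p.1 1, Pi.single p.2 1} := by
  rintro x ⟨y, hle, hdist, rfl⟩
  set c : ℕ := n + 1 - m with hc
  have hc' : ((n : ℝ) - m + 1) = (c : ℝ) := by
    rw [hc, Nat.cast_sub hn]
    push_cast
    ring
  set q : Fin m → ℝ := fun i => if c = 0 then 0 else ((min (y i) c : ℕ) : ℝ) / c with hq
  have hq0 : ∀ i, 0 ≤ q i := by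
    intro i
    rw [hq]
    split_ifs
    · exact le_refl _
    · positivity
  have hq1 : ∀ i, q i ≤ 1 := by
    intro i
    simp only [hq]
    split_ifs with h
    · norm_num
    · rw [div_le_one (by positivity)]
      exact_mod_cast Nat.cast_le.2 (min_le_right _ _)
  set r : Fin m → ℕ := fun i => y i - c with hr
  have hd' : ∀ i j, i ≠ j → r i ≠ 0 → r j ≠ 0 → r i ≠ r j := by
    intro i j hij hri hrj
    simp only [hr] at *
    intro he
    have h1 : c < y i := by omega
    have h2 : c < y j := by omega
    exact hdist i j hij (by omega) (by omega) (by omega)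
  have hb' : ∀ i, r i + 1 ≤ m := by
    intro i
    have := hle i
    simp only [hr]
    omega
  have heq : (fun i => (y i : ℝ)) = ((n : ℝ) - m + 1) • q + fun k => (r k : ℝ) := by
    funext i
    simp only [Pi.add_apply, Pi.smul_apply, smul_eq_mul, hq, hr, hc']
    rcases eq_or_ne c 0 with h0 | h0
    · rw [if_pos h0, h0]
      push_cast
      simp
    · rw [if_neg h0]
      have hcr : (c : ℝ) ≠ 0 := Nat.cast_ne_zero.2 h0
      rw [mul_div_cancel₀ _ hcr]
      have harith : min (y i) c + (y i - c) = y i := by omega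
      calc (y i : ℝ) = ((min (y i) c + (y i - c) : ℕ) : ℝ) := by rw [harith]
        _ = _ := by push_cast; ring
  rw [heq]
  exact Set.add_mem_add (Set.smul_mem_smul_set (q_mem_Q q hq0 hq1)) (r_mem_R0 r hd' hb')

theorem dir2 (hm : 1 ≤ m) (hn : m ≤ n + 1) :
    ((n : ℝ) - m + 1) • Q0 m + R0 m ⊆ convexHull ℝ (Agen m n) := by
  intro x hx
  rcases Set.mem_add.1 hx with ⟨a, ha, b, hb, rfl⟩
  rcases Set.mem_smul_set.1 ha with ⟨q0, hq0, rfl⟩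
  rw [Q0, Set.mem_finset_sum] at hq0
  obtain ⟨g, hg, hgsum⟩ := hq0
  rw [R0, Set.mem_finset_sum] at hb
  obtain ⟨t, ht, htsum⟩ := hb
  classical
  set zq : Fin m → ℕ := fun k => if g k = 0 then 0 else 1 with hzq
  set τ : Fin m × Fin m → Fin m → ℕ := fun p k => if t p k = 0 then 0 else 1 with hτ
  set z : Fin m → ℕ := fun k => (n + 1 - m) * zq k + ∑ p ∈ pairs m, τ p k with hz
  have hgval : ∀ k, q0 k = (zq k : ℝ) := by
    intro k
    rw [← hgsum, Finset.sum_apply]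
    rw [Finset.sum_eq_single k]
    · have htmp : g k = 0 ∨ g k = Pi.single k 1 := by simpa using hg (Finset.mem_univ k)
      rcases htmp with h | h
      · rw [h]
        simp [hzq, h]
      · have hne : Pi.single k (1 : ℝ) ≠ (0 : Fin m → ℝ) := by
          intro hcon
          have := congrFun hcon k
          simp at this
        simp only [hzq, h, if_neg hne]
        simp
    · intro i _ hik
      have htmp : g i = 0 ∨ g i = Pi.single i 1 := by simpa using hg (Finset.mem_univ i)
      rcases htmp with h | h
      · rw [h]; rfl
      · rw [h]
        exact Pi.single_eq_of_ne (Ne.symm hik) 1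
    · intro hcon
      exact absurd (Finset.mem_univ k) hcon
  have hτval : ∀ p ∈ pairs m, ∀ k, t p k = (τ p k : ℝ) := by
    intro p hp k
    simp only [hτ]
    have htmp : t p = 0 ∨ t p = Pi.single p.1 1 ∨ t p = Pi.single p.2 1 := by simpa using ht hp
    rcases htmp with h | h | h <;> rw [h]
    · simp
    · rcases eq_or_ne k p.1 with rfl | hk
      · simp
      · rw [Pi.single_eq_of_ne hk]
        simp
    · rcases eq_or_ne k p.2 with rfl | hk
      · simp
      · rw [Pi.single_eq_of_ne hk]
        simp
  have hgood : Good m n z := by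
    intro S
    have hsum : ∑ k ∈ S, z k = (n + 1 - m) * ∑ k ∈ S, zq k + ∑ k ∈ S, ∑ p ∈ pairs m, τ p k := by
      rw [hz]
      rw [Finset.sum_add_distrib, Finset.mul_sum]
    have h1 : ∑ k ∈ S, zq k ≤ S.card := by
      have : ∀ k ∈ S, zq k ≤ 1 := by
        intro k _
        simp only [hzq]
        split_ifs <;> omega
      calc ∑ k ∈ S, zq k ≤ ∑ k ∈ S, 1 := Finset.sum_le_sum this
        _ = S.card := by simp
    have h2 : ∑ k ∈ S, ∑ p ∈ pairs m, τ p k ≤ ∑ k ∈ Finset.range S.card, (m - 1 - k) := by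
      rw [Finset.sum_comm]
      refine le_trans (Finset.sum_le_sum ?_) (Ecount S)
      intro p hp
      have htmp : t p = 0 ∨ t p = Pi.single p.1 1 ∨ t p = Pi.single p.2 1 := by simpa using ht hp
      rcases htmp with h | h | h
      · have : ∀ k ∈ S, τ p k = 0 := by
          intro k _
          simp [hτ, h]
        rw [Finset.sum_congr rfl this]
        simp
      · have : ∀ k ∈ S, τ p k = if k = p.1 then 1 else 0 := by
          intro k _
          simp only [hτ, h]
          rcases eq_or_ne k p.1 with rfl | hk
          · simp
          · rw [Pi.single_eq_of_ne hk]
            simp [hk]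
        rw [Finset.sum_congr rfl this, Finset.sum_ite_eq' S p.1]
        split_ifs with ha hb
        · exact le_refl _
        · exact absurd (Or.inl ha) hb
        · exact Nat.zero_le _
        · exact Nat.zero_le _
      · have : ∀ k ∈ S, τ p k = if k = p.2 then 1 else 0 := by
          intro k _
          simp only [hτ, h]
          rcases eq_or_ne k p.2 with rfl | hk
          · simp
          · rw [Pi.single_eq_of_ne hk]
            simp [hk]
        rw [Finset.sum_congr rfl this, Finset.sum_ite_eq' S p.2]
        split_ifs with ha hb
        · exact le_refl _
        · exact absurd (Or.inr ha) hb
        · exact Nat.zero_le _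
        · exact Nat.zero_le _
    have hcardS : S.card ≤ m := by
      have := Finset.card_le_univ S
      simpa using this
    calc ∑ k ∈ S, z k ≤ (n + 1 - m) * S.card + ∑ k ∈ Finset.range S.card, (m - 1 - k) := by
          rw [hsum]
          exact Nat.add_le_add (Nat.mul_le_mul_left _ h1) h2
      _ = fb n S.card := fb_split hn hcardS
  have hxz : (((n : ℝ) - m + 1) • q0 + b) = fun i => (z i : ℝ) := by
    funext k
    have hc' : ((n : ℝ) - m + 1) = ((n + 1 - m : ℕ) : ℝ) := by
      rw [Nat.cast_sub hn]
      push_cast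
      ring
    simp only [Pi.add_apply, Pi.smul_apply, smul_eq_mul]
    rw [hgval k, ← htsum, Finset.sum_apply, hz, hc']
    push_cast
    rw [Finset.sum_congr rfl fun p hp => hτval p hp k]
  rw [hxz]
  exact lemG hn z hgood

end PPM

/-- for `n ≥ m-1`, `P(m,n)` equals the Minkowski sum
`(n-m+1)·∑_{i=1}^m conv{0,e_i} + ∑_{1≤i<j≤m} conv{0,e_i,e_j}`. -/
theorem partialPermutohedron_minkowski (m n : ℕ) (hm : 1 ≤ m) (hn : m ≤ n + 1) :
    partialPermutohedron m n =
      ((n : ℝ) - m + 1) • (∑ i : Fin m, convexHull ℝ {(0 : Fin m → ℝ), Pi.single i 1}) +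
        ∑ p ∈ Finset.univ.filter (fun p : Fin m × Fin m => p.1 < p.2),
          convexHull ℝ {(0 : Fin m → ℝ), Pi.single p.1 1, Pi.single p.2 1} := by
  have hQ : (∑ i : Fin m, convexHull ℝ ({(0 : Fin m → ℝ), Pi.single i 1} : Set (Fin m → ℝ)))
      = convexHull ℝ (PPM.Q0 m) := by
    rw [PPM.Q0, convexHull_sum]
  have hR : (∑ p ∈ Finset.univ.filter (fun p : Fin m × Fin m => p.1 < p.2),
        convexHull ℝ ({(0 : Fin m → ℝ), Pi.single p.1 1, Pi.single p.2 1} : Set (Fin m → ℝ)))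
      = convexHull ℝ (PPM.R0 m) := by
    rw [PPM.R0, convexHull_sum, PPM.pairs]
  show convexHull ℝ (PPM.Agen m n) = _
  refine Set.Subset.antisymm ?_ ?_
  · rw [hQ, hR, ← convexHull_smul, ← convexHull_add]
    refine convexHull_min ?_ (convex_convexHull ℝ _)
    have h1 := PPM.dir1 (m := m) (n := n) hm hn
    rw [PPM.pairs] at h1
    rwa [hQ, hR, ← convexHull_smul, ← convexHull_add] at h1
  · rw [hQ, hR, ← convexHull_smul, ← convexHull_add]
    exact convexHull_min (PPM.dir2 hm hn) (convex_convexHull ℝ _)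
end

section
/- For m ≥ 2, the parking function polytope P_m (the convex hull of all parking functions of length m) equals the translate of the partial permutohedron P(m,m-1) by the all-ones vector: P(m,m-1) = { x - (1,...,1) : x ∈ P_m }. -/
open Pointwise

/-- `y : Fin m → ℕ` is a parking function of length `m`: all entries are positive and
some rearrangement into nondecreasing order `r₁ ≤ … ≤ r_m` satisfies `r_i ≤ i`. -/
def IsParkingFunction {m : ℕ} (y : Fin m → ℕ) : Prop :=
  (∀ i, 1 ≤ y i) ∧ ∃ σ : Equiv.Perm (Fin m),
    Monotone (y ∘ σ) ∧ ∀ i : Fin m, y (σ i) ≤ (i : ℕ) + 1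

/-- The parking function polytope `P_m ⊆ ℝ^m`: the convex hull of all parking
functions of length `m`. -/
noncomputable def parkingFunctionPolytope (m : ℕ) : Set (Fin m → ℝ) :=
  convexHull ℝ {x : Fin m → ℝ | ∃ y : Fin m → ℕ,
    IsParkingFunction y ∧ x = fun i => (y i : ℝ)}

open Finset

lemma card_filter_val_lt {m c : ℕ} (hc : c ≤ m) :
    (univ.filter fun s : Fin m => (s : ℕ) < c).card = c := by
  have : (univ.filter fun s : Fin m => (s : ℕ) < c) =
      (univ : Finset (Fin c)).map ⟨Fin.castLE hc, (Fin.castLE_injective hc)⟩ := by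
    ext s
    simp only [mem_filter, mem_univ, true_and, mem_map, Function.Embedding.coeFn_mk]
    constructor
    · intro hs; exact ⟨⟨s, hs⟩, rfl⟩
    · rintro ⟨t, rfl⟩; exact t.2
  rw [this, card_map, card_univ, Fintype.card_fin]


lemma isParking_iff {m : ℕ} (y : Fin m → ℕ) :
    IsParkingFunction y ↔ (∀ i, 1 ≤ y i) ∧
      ∀ k, 1 ≤ k → k ≤ m → k ≤ (univ.filter fun t => y t ≤ k).card := by
  constructor
  · rintro ⟨h1, σ, hmono, hb⟩
    refine ⟨h1, fun k hk1 hkm => ?_⟩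
    have hsub : ((univ : Finset (Fin m)).filter fun s : Fin m => (s : ℕ) < k).image σ ⊆
        univ.filter fun t => y t ≤ k := by
      intro t ht
      simp only [mem_image, mem_filter, mem_univ, true_and] at ht ⊢
      obtain ⟨s, hs, rfl⟩ := ht
      calc y (σ s) ≤ (s : ℕ) + 1 := hb s
        _ ≤ k := hs
    calc k = ((univ : Finset (Fin m)).filter fun s : Fin m => (s : ℕ) < k).card :=
          (card_filter_val_lt hkm).symm
      _ = (((univ : Finset (Fin m)).filter fun s : Fin m => (s : ℕ) < k).image σ).card :=
          (card_image_of_injective _ σ.injective).symm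
      _ ≤ _ := card_le_card hsub
  · rintro ⟨h1, hcnt⟩
    refine ⟨h1, Tuple.sort y, Tuple.monotone_sort y, fun i => ?_⟩
    by_contra hlt
    push_neg at hlt
    set k : ℕ := (i : ℕ) + 1 with hk
    have hkm : k ≤ m := i.2
    have himg : (univ.filter fun t => y t ≤ k) =
        ((univ : Finset (Fin m)).filter fun s : Fin m => y (Tuple.sort y s) ≤ k).image (Tuple.sort y) := by
      ext t
      simp only [mem_image, mem_filter, mem_univ, true_and]
      constructor
      · intro ht; exact ⟨(Tuple.sort y).symm t, by simpa using ht, by simp⟩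
      · rintro ⟨s, hs, rfl⟩; exact hs
    have hsub : ((univ : Finset (Fin m)).filter fun s : Fin m => y (Tuple.sort y s) ≤ k) ⊆
        univ.filter fun s : Fin m => (s : ℕ) < (i : ℕ) := by
      intro s hs
      simp only [mem_filter, mem_univ, true_and] at hs ⊢
      by_contra hsi
      push_neg at hsi
      have : y (Tuple.sort y i) ≤ y (Tuple.sort y s) :=
        Tuple.monotone_sort y (by exact Fin.le_def.mpr hsi)
      omega
    have := hcnt k (by omega) hkm
    rw [himg, card_image_of_injective _ (Tuple.sort y).injective] at this
    have := card_le_card hsub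
    rw [card_filter_val_lt (le_of_lt i.2)] at this
    omega

lemma isParking_comp_perm {m : ℕ} {y : Fin m → ℕ} (h : IsParkingFunction y)
    (τ : Equiv.Perm (Fin m)) : IsParkingFunction (y ∘ τ) := by
  obtain ⟨h1, σ, hmono, hb⟩ := h
  refine ⟨fun i => h1 (τ i), σ.trans τ.symm, ?_, fun i => ?_⟩
  · have : (y ∘ τ) ∘ (σ.trans τ.symm) = y ∘ σ := by
      funext i; simp
    rw [this]; exact hmono
  · simpa using hb i


lemma parking_le {m : ℕ} {y : Fin m → ℕ} (h : IsParkingFunction y) (t : Fin m) :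
    y t ≤ m := by
  obtain ⟨h1, σ, hmono, hb⟩ := h
  have := hb (σ.symm t)
  have h2 : y t ≤ (σ.symm t : ℕ) + 1 := by simpa using this
  have := (σ.symm t).2
  omega


/-- generator plus one is a parking function -/
lemma gen_add_one_parking {m : ℕ} (hm : 1 ≤ m) (z : Fin m → ℕ)
    (hz1 : ∀ i, z i ≤ m - 1)
    (hz2 : ∀ i j, i ≠ j → z i ≠ 0 → z j ≠ 0 → z i ≠ z j) :
    IsParkingFunction (fun t => z t + 1) := by
  rw [isParking_iff]
  refine ⟨fun i => by omega, fun k hk1 hkm => ?_⟩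
  -- complement count
  have hinj : Set.InjOn z ((univ : Finset (Fin m)).filter fun t => k ≤ z t) := by
    intro a ha b hb hab
    simp only [coe_filter, Set.mem_setOf_eq, mem_univ, true_and] at ha hb
    by_contra hne
    exact hz2 a b hne (by omega) (by omega) hab
  have hmaps : ∀ t ∈ (univ : Finset (Fin m)).filter fun t => k ≤ z t,
      z t ∈ Finset.Icc k (m - 1) := by
    intro t ht
    simp only [mem_filter, mem_univ, true_and] at ht
    exact mem_Icc.mpr ⟨ht, hz1 t⟩
  have hcard : ((univ : Finset (Fin m)).filter fun t => k ≤ z t).card ≤ m - k := by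
    have := Finset.card_le_card_of_injOn z hmaps hinj
    have hIcc : (Finset.Icc k (m - 1)).card = m - k := by
      rw [Nat.card_Icc]; omega
    omega
  have hsplit : ((univ : Finset (Fin m)).filter fun t => z t + 1 ≤ k).card
      + ((univ : Finset (Fin m)).filter fun t => k ≤ z t).card = m := by
    have := Finset.card_filter_add_card_filter_not
      (s := (univ : Finset (Fin m))) (p := fun t => z t + 1 ≤ k)
    simp only [card_univ, Fintype.card_fin] at this
    have heq : (univ : Finset (Fin m)).filter (fun a => ¬ z a + 1 ≤ k)
        = (univ : Finset (Fin m)).filter fun t => k ≤ z t := by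
      apply Finset.filter_congr
      intro t _
      simp only [not_le, eq_iff_iff]
      omega
    rw [heq] at this
    exact this
  omega

lemma step_parking {m : ℕ} {y : Fin m → ℕ} (h : IsParkingFunction y)
    {i j : Fin m} (hij : i ≠ j) (h2 : 2 ≤ y i) (heq : y i = y j) :
    IsParkingFunction (Function.update (Function.update y i (y i + 1)) j (y j - 1)) ∧
    (∑ t, (Function.update (Function.update y i (y i + 1)) j (y j - 1)) t ^ 2)
      = (∑ t, y t ^ 2) + 2 := by
  set v := y i with hv
  set y' := Function.update (Function.update y i (y i + 1)) j (y j - 1) with hy'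
  have hvm : v ≤ m := parking_le h i
  have h'i : y' i = v + 1 := by
    rw [hy', Function.update_of_ne hij, Function.update_self]
  have h'j : y' j = v - 1 := by
    rw [hy', Function.update_self, heq]
  have h'o : ∀ t, t ≠ i → t ≠ j → y' t = y t := by
    intro t hti htj
    rw [hy', Function.update_of_ne htj, Function.update_of_ne hti]
  obtain ⟨h1, hcnt⟩ := (isParking_iff y).mp h
  constructor
  · rw [isParking_iff]
    constructor
    · intro t
      by_cases hti : t = i
      · subst hti; omega
      by_cases htj : t = j
      · subst htj; rw [h'j]; omega
      · rw [h'o t hti htj]; exact h1 t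
    · intro k hk1 hkm
      by_cases hkv : k = v
      · -- k = v : use insert j (filter (y ≤ v-1))
        subst hkv
        have hsub : insert j (univ.filter fun t => y t ≤ v - 1) ⊆
            univ.filter fun t => y' t ≤ v := by
          intro t ht
          rcases Finset.mem_insert.mp ht with rfl | ht
          · simp only [mem_filter, mem_univ, true_and, h'j]; omega
          · simp only [mem_filter, mem_univ, true_and] at ht ⊢
            have hti : t ≠ i := by intro h'; subst h'; omega
            have htj : t ≠ j := by intro h'; subst h'; omega
            rw [h'o t hti htj]; omega
        have hjnot : j ∉ (univ.filter fun t => y t ≤ v - 1) := by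
          simp only [mem_filter, mem_univ, true_and, not_le, ← heq]; omega
        have hc1 := Finset.card_le_card hsub
        rw [Finset.card_insert_of_notMem hjnot] at hc1
        have hc2 := hcnt (v - 1) (by omega) (by omega)
        omega
      · -- k ≠ v : superset of filter y ≤ k
        have hsub : (univ.filter fun t => y t ≤ k) ⊆
            univ.filter fun t => y' t ≤ k := by
          intro t ht
          simp only [mem_filter, mem_univ, true_and] at ht ⊢
          by_cases hti : t = i
          · subst hti; rw [h'i]; omega
          by_cases htj : t = j
          · subst htj; rw [h'j]; rw [← heq] at ht; omega
          · rw [h'o t hti htj]; omega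
        exact le_trans (hcnt k hk1 hkm) (Finset.card_le_card hsub)
  · -- sum of squares
    have hij' : i ∈ (univ.erase j) := Finset.mem_erase.mpr ⟨hij, mem_univ i⟩
    have e1 : (∑ t, y' t ^ 2) = y' j ^ 2 + ∑ t ∈ univ.erase j, y' t ^ 2 :=
      (Finset.add_sum_erase _ _ (mem_univ j)).symm
    have e2 : (∑ t ∈ univ.erase j, y' t ^ 2)
        = y' i ^ 2 + ∑ t ∈ (univ.erase j).erase i, y' t ^ 2 :=
      (Finset.add_sum_erase _ _ hij').symm
    have e3 : (∑ t, y t ^ 2) = y j ^ 2 + ∑ t ∈ univ.erase j, y t ^ 2 :=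
      (Finset.add_sum_erase _ _ (mem_univ j)).symm
    have e4 : (∑ t ∈ univ.erase j, y t ^ 2)
        = y i ^ 2 + ∑ t ∈ (univ.erase j).erase i, y t ^ 2 :=
      (Finset.add_sum_erase _ _ hij').symm
    have e5 : (∑ t ∈ (univ.erase j).erase i, y' t ^ 2)
        = ∑ t ∈ (univ.erase j).erase i, y t ^ 2 := by
      apply Finset.sum_congr rfl
      intro t ht
      rw [Finset.mem_erase, Finset.mem_erase] at ht
      rw [h'o t ht.1 ht.2.1]
    have harith : ∀ u : ℕ, 2 ≤ u → (u - 1) ^ 2 + (u + 1) ^ 2 = u ^ 2 + u ^ 2 + 2 := by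
      intro u hu
      obtain ⟨w, rfl⟩ : ∃ w, u = w + 2 := ⟨u - 2, by omega⟩
      show (w + 1) ^ 2 + (w + 3) ^ 2 = (w + 2) ^ 2 + (w + 2) ^ 2 + 2
      ring
    rw [e1, e2, e5, h'i, h'j, e3, e4, ← heq, ← hv]
    linarith [harith v h2]

lemma parking_sub_one_mem_hull {m : ℕ} (hm : 1 ≤ m) :
    ∀ n : ℕ, ∀ y : Fin m → ℕ, IsParkingFunction y →
      m * m * m ≤ (∑ t, y t ^ 2) + n →
      ((fun t => (y t : ℝ)) - fun _ => 1) ∈ partialPermutohedron m (m - 1) := by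
  intro n
  induction n using Nat.strong_induction_on with
  | _ n IH =>
    intro y hy hmeas
    have h1 := hy.1
    by_cases hdist : ∀ a b : Fin m, a ≠ b → 2 ≤ y a → 2 ≤ y b → y a ≠ y b
    · -- base case: y - 1 is a generator
      apply subset_convexHull ℝ _
      refine ⟨fun t => y t - 1, fun t => ?_, fun a b hab ha hb => ?_, ?_⟩
      · show y t - 1 ≤ m - 1
        have := parking_le hy t; omega
      · show y a - 1 ≠ y b - 1
        have ha' : y a - 1 ≠ 0 := ha
        have hb' : y b - 1 ≠ 0 := hb
        have h2a : 2 ≤ y a := by omega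
        have h2b : 2 ≤ y b := by omega
        have := hdist a b hab h2a h2b
        omega
      · funext t
        have := h1 t
        simp only [Pi.sub_apply]
        push_cast [this]
        ring
    · push_neg at hdist
      obtain ⟨a, b, hab, h2a, h2b, heq⟩ := hdist
      obtain ⟨hp', hs'⟩ := step_parking hy hab h2a heq
      obtain ⟨hp'', hs''⟩ := step_parking hy (Ne.symm hab) h2b heq.symm
      set y' := Function.update (Function.update y a (y a + 1)) b (y b - 1) with hy'd
      set y'' := Function.update (Function.update y b (y b + 1)) a (y a - 1) with hy''d
      -- bound on sum of squares of y'
      have hb' : ∀ t, y' t ≤ m := parking_le hp'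
      have hsum' : (∑ t, y' t ^ 2) ≤ m * m * m := by
        calc (∑ t, y' t ^ 2) ≤ ∑ _t : Fin m, m ^ 2 :=
              Finset.sum_le_sum fun t _ => Nat.pow_le_pow_left (hb' t) 2
          _ = m * m * m := by simp [Finset.sum_const]; ring
      have hn2 : 2 ≤ n := by omega
      have hm' : ((fun t => (y' t : ℝ)) - fun _ => 1) ∈ partialPermutohedron m (m - 1) :=
        IH (n - 2) (by omega) y' hp' (by omega)
      have hm'' : ((fun t => (y'' t : ℝ)) - fun _ => 1) ∈ partialPermutohedron m (m - 1) :=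
        IH (n - 2) (by omega) y'' hp'' (by omega)
      -- midpoint identity
      have hnat : ∀ t, y' t + y'' t = 2 * y t := by
        intro t
        by_cases hta : t = a
        · subst hta
          rw [hy'd, hy''d, Function.update_of_ne hab, Function.update_self,
            Function.update_self]
          omega
        by_cases htb : t = b
        · subst htb
          rw [hy'd, hy''d, Function.update_self, Function.update_of_ne (Ne.symm hab),
            Function.update_self]
          omega
        · rw [hy'd, hy''d, Function.update_of_ne htb, Function.update_of_ne hta,
            Function.update_of_ne hta, Function.update_of_ne htb]
          omega
      have hmid : ((fun t => (y t : ℝ)) - fun _ => 1) =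
          (1/2 : ℝ) • ((fun t => (y' t : ℝ)) - fun _ => 1)
          + (1/2 : ℝ) • ((fun t => (y'' t : ℝ)) - fun _ => 1) := by
        funext t
        have := hnat t
        have hc : (y' t : ℝ) + (y'' t : ℝ) = 2 * (y t : ℝ) := by
          exact_mod_cast congrArg (Nat.cast : ℕ → ℝ) this
        simp only [Pi.add_apply, Pi.smul_apply, Pi.sub_apply, smul_eq_mul]
        linarith
      rw [hmid]
      exact (convex_convexHull ℝ _) hm' hm'' (by norm_num) (by norm_num) (by norm_num)


/-- for `m ≥ 2`, `P(m,m-1)` is the translate of the parking function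
polytope `P_m` by `-(1,…,1)`. -/
theorem partialPermutohedron_eq_translated_parking (m : ℕ) (hm : 2 ≤ m) :
    partialPermutohedron m (m - 1) =
      {z : Fin m → ℝ | ∃ x ∈ parkingFunctionPolytope m, z = x - fun _ => 1} := by
  have hm1 : 1 ≤ m := by omega
  set c : Fin m → ℝ := fun _ => 1 with hc
  set B : Set (Fin m → ℝ) := {x : Fin m → ℝ | ∃ y : Fin m → ℕ,
    IsParkingFunction y ∧ x = fun i => (y i : ℝ)} with hB
  set A : Set (Fin m → ℝ) := {x : Fin m → ℝ | ∃ y : Fin m → ℕ,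
    (∀ i, y i ≤ m - 1) ∧
    (∀ i j, i ≠ j → y i ≠ 0 → y j ≠ 0 → y i ≠ y j) ∧
    x = fun i => (y i : ℝ)} with hA
  have hRHS : {z : Fin m → ℝ | ∃ x ∈ parkingFunctionPolytope m, z = x - fun _ => 1}
      = (-c) +ᵥ convexHull ℝ B := by
    ext z
    simp only [Set.mem_setOf_eq, Set.mem_vadd_set]
    constructor
    · rintro ⟨x, hx, rfl⟩
      exact ⟨x, hx, by funext t; simp [hc]; ring⟩
    · rintro ⟨x, hx, rfl⟩
      exact ⟨x, hx, by funext t; simp [hc]; ring⟩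
  rw [hRHS, ← convexHull_vadd]
  show convexHull ℝ A = convexHull ℝ ((-c) +ᵥ B)
  apply le_antisymm
  · apply convexHull_mono
    rintro x ⟨z, hz1, hz2, rfl⟩
    refine Set.mem_vadd_set.mpr ⟨fun t => ((z t + 1 : ℕ) : ℝ), ?_, ?_⟩
    · exact ⟨fun t => z t + 1, gen_add_one_parking hm1 z hz1 hz2, rfl⟩
    · funext t
      simp only [vadd_eq_add, Pi.add_apply, Pi.neg_apply, hc]
      push_cast
      ring
  · apply convexHull_min _ (convex_convexHull ℝ A)
    rintro x hx
    obtain ⟨w, ⟨y, hy, rfl⟩, rfl⟩ := Set.mem_vadd_set.mp hx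
    have hkey := parking_sub_one_mem_hull hm1 (m * m * m) y hy (by omega)
    have : (-c) +ᵥ (fun i => (y i : ℝ)) = ((fun t => (y t : ℝ)) - fun _ => 1) := by
      funext t
      simp only [vadd_eq_add, Pi.add_apply, Pi.neg_apply, Pi.sub_apply, hc]
      ring
    rw [this]
    exact hkey
end
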